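/- arXiv:1305.3627 — 4 statements merged into one kernel-verified Lean document; each statement's English description precedes it below -/
import Mathlib

section
/- For any complex numbers a, b and any complex-valued function u defined in a neighborhood of 1 with limit u₀ as q→1, where 0 < u₀ < 1, the ratio of infinite q-Pochhammer symbols (q^a u(q); q)_∞ / (q^b u(q); q)_∞ converges to (1 - u₀)^(b-a) as q→1⁻. -/
open Filter Topology

/-- The infinite q-Pochhammer symbol `(x; q)_∞ = ∏_{i=0}^∞ (1 - x q^i)`. -/
noncomputable def qPochInf (x q : ℂ) : ℂ := ∏' i : ℕ, (1 - x * q ^ i)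

namespace QPochAux
open Complex

lemma norm_exp_sub_one_le' (w : ℂ) : ‖exp w - 1‖ ≤ ‖w‖ * Real.exp ‖w‖ := by
  have key : ∀ t ∈ Set.Icc (0:ℝ) 1, HasDerivWithinAt (fun t : ℝ => exp ((t:ℂ) * w))
      (exp ((t:ℂ) * w) * w) (Set.Icc (0:ℝ) 1) t := by
    intro t _
    have h1 : HasDerivAt (fun t : ℝ => ((t:ℂ))) 1 t := by
      simpa using (hasDerivAt_id t).ofReal_comp
    have h2 : HasDerivAt (fun t : ℝ => (t:ℂ) * w) w t := by
      simpa using h1.mul_const w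
    simpa using h2.cexp.hasDerivWithinAt
  have bound : ∀ t ∈ Set.Ico (0:ℝ) 1, ‖exp ((t:ℂ) * w) * w‖ ≤ Real.exp ‖w‖ * ‖w‖ := by
    intro t ht
    rw [norm_mul]
    gcongr
    rw [Complex.norm_exp]
    apply Real.exp_le_exp.mpr
    have h1 : ((t:ℂ) * w).re = t * w.re := by simp
    rw [h1]
    calc t * w.re ≤ |t * w.re| := le_abs_self _
      _ = t * |w.re| := by rw [abs_mul, _root_.abs_of_nonneg ht.1]
      _ ≤ 1 * ‖w‖ := by
          apply mul_le_mul ht.2.le (Complex.abs_re_le_norm w) (abs_nonneg _) zero_le_one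
      _ = ‖w‖ := one_mul _
  have := norm_image_sub_le_of_norm_deriv_le_segment_01' key bound
  simpa [mul_comm] using this

lemma tendsto_slope_exp (c : ℂ) :
    Tendsto (fun t : ℝ => (exp (c * t) - 1) / t) (𝓝[≠] (0:ℝ)) (𝓝 c) := by
  have h1 : HasDerivAt (fun t : ℝ => ((t:ℂ))) 1 0 := by
    simpa using (hasDerivAt_id (0:ℝ)).ofReal_comp
  have h2 : HasDerivAt (fun t : ℝ => c * (t:ℂ)) c 0 := by simpa using h1.const_mul c
  have h3 : HasDerivAt (fun t : ℝ => exp (c * (t:ℝ))) c 0 := by simpa using h2.cexp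
  have h4 := hasDerivAt_iff_tendsto_slope.mp h3
  refine h4.congr fun t => ?_
  simp [slope, vsub_eq_sub, Complex.real_smul, Complex.ofReal_inv, div_eq_inv_mul]

lemma tendsto_ratio (a b : ℂ) (m : ℕ) (hm : m ≠ 0) :
    Tendsto (fun t : ℝ =>
        (exp ((m:ℂ) * b * t) - exp ((m:ℂ) * a * t)) / ((m:ℂ) * (1 - exp ((m:ℂ) * t))))
      (𝓝[≠] (0:ℝ)) (𝓝 ((a - b) / m)) := by
  have hmC : ((m:ℂ)) ≠ 0 := Nat.cast_ne_zero.mpr hm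
  have hN : Tendsto (fun t : ℝ => (exp ((m:ℂ)*b*t) - 1)/t - (exp ((m:ℂ)*a*t) - 1)/t)
      (𝓝[≠] (0:ℝ)) (𝓝 ((m:ℂ)*b - (m:ℂ)*a)) := by
    have h1 := tendsto_slope_exp ((m:ℂ)*b)
    have h2 := tendsto_slope_exp ((m:ℂ)*a)
    exact h1.sub h2
  have hD : Tendsto (fun t : ℝ => (m:ℂ) * (-((exp ((m:ℂ)*t) - 1)/t)))
      (𝓝[≠] (0:ℝ)) (𝓝 ((m:ℂ) * (-(m:ℂ)))) := ((tendsto_slope_exp ((m:ℂ))).neg).const_mul _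
  have hne : (m:ℂ) * (-(m:ℂ)) ≠ 0 := by simp [hmC]
  have hdiv := hN.div hD hne
  have hval : ((m:ℂ)*b - (m:ℂ)*a) / ((m:ℂ) * (-(m:ℂ))) = (a - b) / m := by
    field_simp
    ring
  rw [hval] at hdiv
  refine hdiv.congr' ?_
  filter_upwards [self_mem_nhdsWithin] with t ht
  have htC : (t:ℂ) ≠ 0 := ofReal_ne_zero.mpr ht
  have e1 : (exp ((m:ℂ)*b*t) - 1)/t - (exp ((m:ℂ)*a*t) - 1)/t
      = (exp ((m:ℂ)*b*t) - exp ((m:ℂ)*a*t))/t := by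
    rw [div_sub_div_same]; ring_nf
  have e2 : (m:ℂ) * (-((exp ((m:ℂ)*t) - 1)/t)) = ((m:ℂ) * (1 - exp ((m:ℂ)*t)))/t := by
    rw [← neg_div, neg_sub, mul_div_assoc]
  simp only [Pi.div_apply]
  rw [e1, e2, div_div_div_comm, div_self htC, div_one]

lemma summable_F {q : ℝ} (hq0 : 0 < q) (hq1 : q < 1) {x : ℂ} (hx : ‖x‖ < 1) :
    Summable (fun m : ℕ => x ^ m / (m * (1 - (q:ℂ) ^ m))) := by
  apply Summable.of_norm
  refine Summable.of_nonneg_of_le (fun m => norm_nonneg _) ?_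
    (((summable_geometric_of_lt_one (norm_nonneg x) hx)).mul_right (1 - q)⁻¹)
  intro m
  match m with
  | 0 => simpa using inv_nonneg.mpr (by linarith : (0:ℝ) ≤ 1 - q)
  | n + 1 =>
    set m := n + 1 with hmdef
    have hm1 : 1 ≤ (m:ℝ) := by exact_mod_cast Nat.one_le_iff_ne_zero.mpr (by omega)
    have hqm : q ^ m ≤ q := by
      calc q ^ m ≤ q ^ 1 := pow_le_pow_of_le_one hq0.le hq1.le (by omega)
        _ = q := pow_one q
    have hden : ((m:ℂ) * (1 - (q:ℂ) ^ m)) = (((m : ℝ) * (1 - q ^ m) : ℝ) : ℂ) := by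
      push_cast; ring
    rw [norm_div, hden, Complex.norm_real, norm_pow]
    rw [Real.norm_eq_abs, _root_.abs_of_nonneg (by nlinarith [pow_le_one₀ hq0.le hq1.le (n := m)])]
    rw [div_le_iff₀ (by nlinarith [pow_le_one₀ hq0.le hq1.le (n := m)])]
    calc ‖x‖ ^ m = ‖x‖ ^ m * ((1-q)⁻¹ * (1 - q)) := by
          rw [inv_mul_cancel₀ (by linarith), mul_one]
      _ ≤ ‖x‖ ^ m * (1-q)⁻¹ * ((m:ℝ) * (1 - q ^ m)) := by
          rw [mul_assoc]
          refine mul_le_mul_of_nonneg_left ?_ (by positivity)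
          refine mul_le_mul_of_nonneg_left ?_ (inv_nonneg.mpr (by linarith))
          calc (1:ℝ) - q = 1 * (1 - q) := (one_mul _).symm
            _ ≤ (m:ℝ) * (1 - q ^ m) :=
                mul_le_mul hm1 (by linarith) (by linarith) (by positivity)

lemma one_sub_exp_neg (s : ℝ) : s * Real.exp (-s) ≤ 1 - Real.exp (-s) := by
  have h1 : s + 1 ≤ Real.exp s := Real.add_one_le_exp s
  have h3 : Real.exp (-s) * Real.exp s = 1 := by rw [← Real.exp_add]; simp
  have h4 := mul_le_mul_of_nonneg_left h1 (Real.exp_nonneg (-s))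
  nlinarith [Real.exp_nonneg (-s)]

lemma poch_eq_exp {q : ℝ} (hq0 : 0 < q) (hq1 : q < 1) {x : ℂ} (hx : ‖x‖ < 1) :
    qPochInf x q = exp (-∑' m : ℕ, x ^ m / (m * (1 - (q:ℂ) ^ m))) := by
  have hqC : ‖(q:ℂ)‖ < 1 := by
    rw [Complex.norm_real, Real.norm_eq_abs, _root_.abs_of_pos hq0]; exact hq1
  have hqC0 : (0:ℝ) ≤ ‖(q:ℂ)‖ := norm_nonneg _
  have hterm : ∀ i : ℕ, ‖x * (q:ℂ) ^ i‖ < 1 := by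
    intro i
    rw [norm_mul, norm_pow]
    calc ‖x‖ * ‖(q:ℂ)‖ ^ i ≤ ‖x‖ * 1 :=
          mul_le_mul_of_nonneg_left (pow_le_one₀ hqC0 hqC.le) (norm_nonneg x)
      _ = ‖x‖ := mul_one _
      _ < 1 := hx
  have hne : ∀ i : ℕ, 1 - x * (q:ℂ) ^ i ≠ 0 := by
    intro i h
    have h1 : x * (q:ℂ) ^ i = 1 := by linear_combination -h
    have h2 := hterm i
    rw [h1] at h2
    simp at h2
  have hgeo : Summable (fun i : ℕ => x * (q:ℂ) ^ i) :=
    (summable_geometric_of_norm_lt_one hqC).mul_left x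
  have hlog : Summable (fun i : ℕ => Complex.log (1 - x * (q:ℂ) ^ i)) := hgeo.clog_one_sub
  -- step 1: tprod = exp (tsum log)
  have hprod : qPochInf x (q:ℂ) = exp (∑' i : ℕ, Complex.log (1 - x * (q:ℂ) ^ i)) := by
    have := Complex.cexp_tsum_eq_tprod (f := fun i : ℕ => 1 - x * (q:ℂ) ^ i) hne hlog
    exact this.symm
  rw [hprod]
  congr 1
  -- step 2: the double sum swap
  have hlog_eq : ∀ i : ℕ, Complex.log (1 - x * (q:ℂ) ^ i)
      = -∑' m : ℕ, (x * (q:ℂ) ^ i) ^ m / m := by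
    intro i
    rw [(hasSum_taylorSeries_neg_log (hterm i)).tsum_eq, neg_neg]
  have huncurry : Summable (Function.uncurry (fun i m : ℕ => (x * (q:ℂ) ^ i) ^ m / m)) := by
    apply Summable.of_norm
    refine Summable.of_nonneg_of_le (fun p => norm_nonneg _) ?_
      ((summable_geometric_of_lt_one hq0.le hq1).mul_of_nonneg
        (summable_geometric_of_lt_one (norm_nonneg x) hx)
        (fun i => by positivity) (fun m => by positivity))
    rintro ⟨i, m⟩
    match m with
    | 0 => simp; positivity
    | n + 1 =>
      set m := n + 1 with hmdef
      have hm1 : 1 ≤ (m:ℝ) := by exact_mod_cast Nat.one_le_iff_ne_zero.mpr (by omega)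
      show ‖(x * (q:ℂ) ^ i) ^ m / (m:ℂ)‖ ≤ q ^ i * ‖x‖ ^ m
      rw [norm_div, norm_pow, norm_mul, norm_pow, Complex.norm_natCast]
      rw [Complex.norm_real, Real.norm_eq_abs, _root_.abs_of_pos hq0]
      calc (‖x‖ * q ^ i) ^ m / (m:ℝ) ≤ (‖x‖ * q ^ i) ^ m / 1 := by
            apply div_le_div_of_nonneg_left (by positivity) (by norm_num) hm1
        _ = ‖x‖ ^ m * (q ^ i) ^ m := by rw [div_one, mul_pow]
        _ ≤ ‖x‖ ^ m * q ^ i := by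
            gcongr
            rw [← pow_mul]
            exact pow_le_pow_of_le_one hq0.le hq1.le (Nat.le_mul_of_pos_right i (by omega))
        _ = q ^ i * ‖x‖ ^ m := mul_comm _ _
  have hinner : ∀ m : ℕ, ∑' i : ℕ, (x * (q:ℂ) ^ i) ^ m / m = x ^ m / (m * (1 - (q:ℂ) ^ m)) := by
    intro m
    match m with
    | 0 => simp
    | n + 1 =>
      set m := n + 1 with hmdef
      have hqm : ‖(q:ℂ) ^ m‖ < 1 := by
        rw [norm_pow]
        exact pow_lt_one₀ hqC0 hqC (by omega)
      have : ∀ i : ℕ, (x * (q:ℂ) ^ i) ^ m / m = x ^ m / m * ((q:ℂ) ^ m) ^ i := by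
        intro i
        rw [mul_pow, ← pow_mul, mul_comm i m, pow_mul]
        ring
      rw [tsum_congr this, tsum_mul_left, tsum_geometric_of_norm_lt_one hqm]
      rw [← div_eq_mul_inv, div_div]
  calc ∑' i : ℕ, Complex.log (1 - x * (q:ℂ) ^ i)
      = ∑' i : ℕ, -∑' m : ℕ, (x * (q:ℂ) ^ i) ^ m / m := tsum_congr hlog_eq
    _ = -∑' i : ℕ, ∑' m : ℕ, (x * (q:ℂ) ^ i) ^ m / m := by rw [tsum_neg]
    _ = -∑' m : ℕ, ∑' i : ℕ, (x * (q:ℂ) ^ i) ^ m / m := by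
        rw [huncurry.tsum_comm]
    _ = -∑' m : ℕ, x ^ m / (m * (1 - (q:ℂ) ^ m)) := by rw [tsum_congr hinner]

lemma ratio_eq {q : ℝ} (hq0 : 0 < q) (hq1 : q < 1) {x y : ℂ} (hx : ‖x‖ < 1) (hy : ‖y‖ < 1) :
    qPochInf x (q:ℂ) / qPochInf y (q:ℂ)
      = exp (∑' m : ℕ, (y ^ m - x ^ m) / (m * (1 - (q:ℂ) ^ m))) := by
  rw [poch_eq_exp hq0 hq1 hx, poch_eq_exp hq0 hq1 hy, ← Complex.exp_sub]
  congr 1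
  rw [neg_sub_neg, ← Summable.tsum_sub (summable_F hq0 hq1 hy) (summable_F hq0 hq1 hx)]
  exact tsum_congr fun m => (sub_div _ _ _).symm

end QPochAux

open QPochAux Complex
theorem stmt0 (a b : ℂ) (u : ℝ → ℂ) (u₀ : ℝ) (hu₀ : 0 < u₀) (hu₁ : u₀ < 1)
    (hu : Tendsto u (𝓝[<] (1 : ℝ)) (𝓝 (u₀ : ℂ))) :
    Tendsto (fun q : ℝ =>
        qPochInf ((q : ℂ) ^ a * u q) (q : ℂ) / qPochInf ((q : ℂ) ^ b * u q) (q : ℂ))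
      (𝓝[<] (1 : ℝ)) (𝓝 ((1 - (u₀ : ℂ)) ^ (b - a))) := by
  set F : Filter ℝ := 𝓝[<] (1:ℝ) with hF_def
  set r : ℝ := (1 + u₀)/2 with hr_def
  have hu₀r : u₀ < r := by rw [hr_def]; linarith
  have hr1 : r < 1 := by rw [hr_def]; linarith
  have hr0 : 0 < r := by rw [hr_def]; linarith
  set ρ : ℝ := (1 + r)/2 with hρ_def
  have hrρ : r < ρ := by rw [hρ_def]; linarith
  have hρ1 : ρ < 1 := by rw [hρ_def]; linarith
  have hρ0 : 0 < ρ := by rw [hρ_def]; linarith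
  set K : ℝ := ‖a‖ + ‖b - a‖ + 1 with hK_def
  have hK : 0 < K := by positivity
  have haK : ‖a‖ ≤ K := by rw [hK_def]; have := norm_nonneg (b - a); linarith
  have hbK : ‖b‖ ≤ K := by
    rw [hK_def]
    have h1 : ‖b‖ ≤ ‖a‖ + ‖b - a‖ := by
      calc ‖b‖ = ‖a + (b - a)‖ := by ring_nf
        _ ≤ ‖a‖ + ‖b - a‖ := norm_add_le _ _
    linarith
  set δ : ℝ := Real.log (ρ/r) / K with hδ_def
  have hρr1 : 1 < ρ/r := by rw [lt_div_iff₀ hr0]; linarith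
  have hδ : 0 < δ := div_pos (Real.log_pos hρr1) hK
  have hδK : δ * K = Real.log (ρ/r) := by rw [hδ_def]; field_simp
  -- eventual facts
  have ev1 : ∀ᶠ q in F, q ∈ Set.Ioo (0:ℝ) 1 :=
    Ioo_mem_nhdsLT_of_mem ⟨one_pos, le_refl 1⟩
  have hlogt : Tendsto Real.log F (𝓝 0) := by
    have h := (Real.continuousAt_log (by norm_num : (1:ℝ) ≠ 0)).tendsto
    rw [Real.log_one] at h
    exact h.mono_left nhdsWithin_le_nhds
  have hlog' : Tendsto Real.log F (𝓝[≠] (0:ℝ)) := by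
    rw [tendsto_nhdsWithin_iff]
    refine ⟨hlogt, ev1.mono fun q hq => ?_⟩
    simpa using (Real.log_neg hq.1 hq.2).ne
  have ev2 : ∀ᶠ q in F, ‖u q‖ < r := by
    have h := hu.norm
    rw [Complex.norm_real, Real.norm_eq_abs, _root_.abs_of_pos hu₀] at h
    exact h.eventually_lt_const hu₀r
  have ev3 : ∀ᶠ q in F, |Real.log q| < δ := by
    have h := hlogt.abs
    rw [abs_zero] at h
    exact h.eventually_lt_const hδ
  -- the summand functions
  set f : ℝ → ℕ → ℂ := fun q m =>
    (((q:ℂ) ^ b * u q) ^ m - ((q:ℂ) ^ a * u q) ^ m) / ((m:ℂ) * (1 - (q:ℂ) ^ m)) with hf_def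
  set g : ℕ → ℂ := fun m => ((u₀:ℂ)) ^ m * ((a - b)/(m:ℂ)) with hg_def
  -- rewriting f in exponential form
  have hrw : ∀ q ∈ Set.Ioo (0:ℝ) 1, ∀ m : ℕ, f q m
      = (u q) ^ m * ((exp ((m:ℂ) * b * (Real.log q : ℝ)) - exp ((m:ℂ) * a * (Real.log q : ℝ)))
          / ((m:ℂ) * (1 - exp ((m:ℂ) * (Real.log q : ℝ))))) := by
    intro q hq m
    have hq0 := hq.1
    have hL : ((q:ℂ)) = exp ((Real.log q : ℝ) : ℂ) := by
      rw [← Complex.ofReal_exp, Real.exp_log hq0]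
    have hc : ∀ c : ℂ, (q:ℂ) ^ c = exp (c * ((Real.log q : ℝ) : ℂ)) := by
      intro c
      rw [Complex.cpow_def_of_ne_zero (Complex.ofReal_ne_zero.mpr hq0.ne'),
        Complex.ofReal_log hq0.le, mul_comm]
    have e1 : ∀ c : ℂ, ((q:ℂ) ^ c * u q) ^ m
        = exp ((m:ℂ) * c * ((Real.log q : ℝ) : ℂ)) * (u q) ^ m := by
      intro c
      rw [mul_pow, hc c, ← Complex.exp_nat_mul]
      congr 2
      ring
    have e2 : ((q:ℂ)) ^ (m:ℕ) = exp ((m:ℂ) * ((Real.log q : ℝ) : ℂ)) := by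
      rw [hL, ← Complex.exp_nat_mul]
    rw [hf_def]
    simp only
    rw [e1 b, e1 a, e2]
    ring
  -- termwise limits
  have hab_lim : ∀ m : ℕ, Tendsto (fun q : ℝ => f q m) F (𝓝 (g m)) := by
    intro m
    match m with
    | 0 =>
      have : ∀ q : ℝ, f q 0 = 0 := by intro q; simp [hf_def]
      have hg0 : g 0 = 0 := by simp [hg_def]
      rw [hg0]
      simpa [this] using tendsto_const_nhds (α := ℂ) (f := F)
    | n + 1 =>
      have h2 := (tendsto_ratio a b (n+1) (by omega)).comp hlog'
      have h3 := (hu.pow (n+1)).mul h2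
      refine h3.congr' ?_
      filter_upwards [ev1] with q hq
      simp only [Function.comp_apply]
      exact (hrw q hq (n+1)).symm
  -- the uniform bound
  have h_bound : ∀ᶠ q in F, ∀ m : ℕ, ‖f q m‖ ≤ ‖b - a‖ * ρ ^ m := by
    filter_upwards [ev1, ev2, ev3] with q hq hur hlq
    intro m
    match m with
    | 0 =>
      have : f q 0 = 0 := by simp [hf_def]
      rw [this, norm_zero]
      positivity
    | n + 1 =>
      have hm0 : (n + 1 : ℕ) ≠ 0 := by omega
      have hm1 : 1 ≤ ((n + 1 : ℕ) : ℝ) := by exact_mod_cast Nat.one_le_iff_ne_zero.mpr hm0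
      have hmpos : (0:ℝ) < ((n + 1 : ℕ) : ℝ) := by linarith
      set m : ℕ := n + 1 with hm_def
      set L : ℝ := Real.log q with hL_def
      have hLneg : L < 0 := Real.log_neg hq.1 hq.2
      set T : ℝ := -L with hT_def
      have hT0 : 0 < T := by rw [hT_def]; linarith
      have hTδ : T < δ := by rwa [abs_of_neg hLneg] at hlq
      have hwnorm : ∀ c : ℂ, ‖(m:ℂ) * c * (L:ℂ)‖ = (m:ℝ) * T * ‖c‖ := by
        intro c
        rw [norm_mul, norm_mul, Complex.norm_natCast, Complex.norm_real, Real.norm_eq_abs,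
          abs_of_neg hLneg]
        ring
      have hre : ∀ c : ℂ, ‖exp ((m:ℂ) * c * (L:ℂ))‖ ≤ Real.exp ((m:ℝ) * T * ‖c‖) := by
        intro c
        have hz : (m:ℂ) * c * (L:ℂ) = ((((m:ℝ) * L : ℝ)) : ℂ) * c := by push_cast; ring
        rw [hz, Complex.norm_exp, Real.exp_le_exp]
        have hzre : (((((m:ℝ) * L : ℝ)) : ℂ) * c).re = ((m:ℝ) * L) * c.re := by
          simp
        rw [hzre]
        calc ((m:ℝ) * L) * c.re ≤ |((m:ℝ) * L) * c.re| := le_abs_self _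
          _ = ((m:ℝ) * T) * |c.re| := by
              rw [abs_mul, abs_mul, Nat.abs_cast, abs_of_neg hLneg]
          _ ≤ ((m:ℝ) * T) * ‖c‖ := by
              apply mul_le_mul_of_nonneg_left (Complex.abs_re_le_norm c) (by positivity)
      -- numerator bound
      have hnum : ‖exp ((m:ℂ) * b * (L:ℂ)) - exp ((m:ℂ) * a * (L:ℂ))‖
          ≤ Real.exp ((m:ℝ) * T * ‖a‖) *
            (((m:ℝ) * T * ‖b - a‖) * Real.exp ((m:ℝ) * T * ‖b - a‖)) := by
        have hsplit : exp ((m:ℂ) * b * (L:ℂ)) - exp ((m:ℂ) * a * (L:ℂ))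
            = exp ((m:ℂ) * a * (L:ℂ)) * (exp ((m:ℂ) * (b - a) * (L:ℂ)) - 1) := by
          rw [mul_sub, ← Complex.exp_add, mul_one]
          congr 2
          ring
        rw [hsplit, norm_mul]
        have h2 : ‖exp ((m:ℂ) * (b - a) * (L:ℂ)) - 1‖
            ≤ ((m:ℝ) * T * ‖b - a‖) * Real.exp ((m:ℝ) * T * ‖b - a‖) := by
          have h := norm_exp_sub_one_le' ((m:ℂ) * (b - a) * (L:ℂ))
          rwa [hwnorm (b - a)] at h
        exact mul_le_mul (hre a) h2 (norm_nonneg _) (Real.exp_nonneg _)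
      -- denominator
      have hdc : (m:ℂ) * (1 - exp ((m:ℂ) * (L:ℂ)))
          = ((((m:ℝ) * (1 - Real.exp ((m:ℝ) * L)) : ℝ)) : ℂ) := by
        have : exp ((m:ℂ) * (L:ℂ)) = ((Real.exp ((m:ℝ) * L) : ℝ) : ℂ) := by
          rw [Complex.ofReal_exp]
          congr 1
          push_cast
          ring
        rw [this]
        push_cast
        ring
      have hexpmL : Real.exp ((m:ℝ) * L) < 1 := by
        rw [← Real.exp_zero]
        apply Real.exp_lt_exp.mpr
        nlinarith
      have hden : ‖(m:ℂ) * (1 - exp ((m:ℂ) * (L:ℂ)))‖ = (m:ℝ) * (1 - Real.exp ((m:ℝ) * L)) := by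
        rw [hdc, Complex.norm_real, Real.norm_eq_abs, _root_.abs_of_nonneg (by nlinarith)]
      have hdenlb : (m:ℝ) * (((m:ℝ) * T) * Real.exp (-((m:ℝ) * T)))
          ≤ (m:ℝ) * (1 - Real.exp ((m:ℝ) * L)) := by
        have hml : (m:ℝ) * L = -((m:ℝ) * T) := by rw [hT_def]; ring
        rw [hml]
        exact mul_le_mul_of_nonneg_left (one_sub_exp_neg _) (Nat.cast_nonneg m)
      have hdenpos : (0:ℝ) < (m:ℝ) * (((m:ℝ) * T) * Real.exp (-((m:ℝ) * T))) := by positivity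
      -- put it together
      rw [hrw q hq m, norm_mul, norm_pow, norm_div, hden]
      calc ‖u q‖ ^ m * (‖exp ((m:ℂ) * b * (L:ℂ)) - exp ((m:ℂ) * a * (L:ℂ))‖
              / ((m:ℝ) * (1 - Real.exp ((m:ℝ) * L))))
          ≤ r ^ m * ((Real.exp ((m:ℝ) * T * ‖a‖) *
              (((m:ℝ) * T * ‖b - a‖) * Real.exp ((m:ℝ) * T * ‖b - a‖)))
              / ((m:ℝ) * (((m:ℝ) * T) * Real.exp (-((m:ℝ) * T))))) := by
            apply mul_le_mul
            · exact pow_le_pow_left₀ (norm_nonneg _) hur.le m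
            · exact div_le_div₀ (by positivity) hnum hdenpos hdenlb
            · exact div_nonneg (norm_nonneg _)
                (mul_nonneg (Nat.cast_nonneg _) (by linarith [hexpmL]))
            · positivity
        _ = ‖b - a‖ * ((r ^ m * Real.exp ((m:ℝ) * (T * K))) / (m:ℝ)) := by
            have hK3 : Real.exp ((m:ℝ) * T * ‖a‖) * Real.exp ((m:ℝ) * T * ‖b - a‖)
                * Real.exp ((m:ℝ) * T) = Real.exp ((m:ℝ) * (T * K)) := by
              rw [← Real.exp_add, ← Real.exp_add, hK_def]
              congr 1
              ring
            have halg : ∀ (A B C nn TT rr cc : ℝ), C ≠ 0 → nn ≠ 0 → TT ≠ 0 →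
                rr ^ m * ((A * ((nn * TT * cc) * B)) / (nn * ((nn * TT) * C⁻¹)))
                  = cc * ((rr ^ m * (A * B * C)) / nn) := by
              intro A B C nn TT rr cc hC hnn hTT
              field_simp
            rw [Real.exp_neg, halg _ _ _ _ _ _ _ (Real.exp_pos _).ne' hmpos.ne' hT0.ne', hK3]
        _ ≤ ‖b - a‖ * ρ ^ m := by
            apply mul_le_mul_of_nonneg_left _ (norm_nonneg _)
            have h2 : Real.exp ((m:ℝ) * (T * K)) = (Real.exp (T * K)) ^ m := by
              rw [← Real.exp_nat_mul]
            have h3 : r * Real.exp (T * K) ≤ ρ := by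
              have h4 : Real.exp (T * K) ≤ ρ / r := by
                rw [← Real.exp_log (show (0:ℝ) < ρ/r by positivity)]
                apply Real.exp_le_exp.mpr
                rw [← hδK]
                apply mul_le_mul_of_nonneg_right hTδ.le hK.le
              calc r * Real.exp (T * K) ≤ r * (ρ / r) :=
                    mul_le_mul_of_nonneg_left h4 hr0.le
                _ = ρ := by field_simp
            calc (r ^ m * Real.exp ((m:ℝ) * (T * K))) / (m:ℝ)
                ≤ r ^ m * Real.exp ((m:ℝ) * (T * K)) :=
                  div_le_self (by positivity) hm1
              _ = (r * Real.exp (T * K)) ^ m := by rw [h2, mul_pow]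
              _ ≤ ρ ^ m := pow_le_pow_left₀ (by positivity) h3 m
  -- dominated convergence
  have hsum : Summable (fun m : ℕ => ‖b - a‖ * ρ ^ m) :=
    (summable_geometric_of_lt_one hρ0.le hρ1).mul_left _
  have hGlim := tendsto_tsum_of_dominated_convergence hsum hab_lim h_bound
  have hgsum : ∑' m, g m = (b - a) * Complex.log (1 - (u₀:ℂ)) := by
    have hnorm : ‖((u₀:ℝ) : ℂ)‖ < 1 := by
      rw [Complex.norm_real, Real.norm_eq_abs, _root_.abs_of_pos hu₀]; exact hu₁
    have htay := (hasSum_taylorSeries_neg_log hnorm).tsum_eq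
    calc ∑' m : ℕ, g m = ∑' m : ℕ, (a - b) * (((u₀:ℝ):ℂ) ^ m / (m:ℂ)) :=
          tsum_congr fun m => by rw [hg_def]; ring
      _ = (a - b) * ∑' m : ℕ, (((u₀:ℝ):ℂ) ^ m / (m:ℂ)) := tsum_mul_left
      _ = (a - b) * (-Complex.log (1 - ((u₀:ℝ):ℂ))) := by rw [htay]
      _ = (b - a) * Complex.log (1 - ((u₀:ℝ):ℂ)) := by ring
  rw [hgsum] at hGlim
  have hexp := (Complex.continuous_exp.tendsto _).comp hGlim
  have h1u : (1 : ℂ) - ((u₀:ℝ):ℂ) ≠ 0 := by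
    rw [show (1:ℂ) - ((u₀:ℝ):ℂ) = (((1 - u₀ : ℝ)) : ℂ) by push_cast; ring]
    exact Complex.ofReal_ne_zero.mpr (by linarith)
  have hrhs : exp ((b - a) * Complex.log (1 - ((u₀:ℝ):ℂ))) = (1 - ((u₀:ℝ):ℂ)) ^ (b - a) := by
    rw [Complex.cpow_def_of_ne_zero h1u, mul_comm]
  rw [hrhs] at hexp
  refine hexp.congr' ?_
  filter_upwards [ev1, ev2, ev3] with q hq hur hlq
  simp only [Function.comp_apply]
  have key : ∀ c : ℂ, ‖c‖ ≤ K → ‖(q:ℂ) ^ c * u q‖ < 1 := by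
    intro c hc
    rw [norm_mul]
    have h1 : ‖(q:ℂ) ^ c‖ = (q:ℝ) ^ c.re := by
      rw [Complex.norm_cpow_eq_rpow_re_of_pos hq.1]
    have h2 : (q:ℝ) ^ c.re = Real.exp (Real.log q * c.re) := Real.rpow_def_of_pos hq.1 _
    have h3 : Real.log q * c.re ≤ δ * K := by
      calc Real.log q * c.re ≤ |Real.log q * c.re| := le_abs_self _
        _ = |Real.log q| * |c.re| := abs_mul _ _
        _ ≤ δ * K := by
            apply mul_le_mul hlq.le ((Complex.abs_re_le_norm c).trans hc) (abs_nonneg _) hδ.le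
    have h4 : ‖(q:ℂ) ^ c‖ ≤ ρ / r := by
      rw [h1, h2, ← Real.exp_log (show (0:ℝ) < ρ/r by positivity), ← hδK]
      exact Real.exp_le_exp.mpr h3
    calc ‖(q:ℂ) ^ c‖ * ‖u q‖ ≤ (ρ / r) * ‖u q‖ :=
          mul_le_mul_of_nonneg_right h4 (norm_nonneg _)
      _ < (ρ / r) * r := by
          apply mul_lt_mul_of_pos_left hur (by positivity)
      _ = ρ := by field_simp
      _ < 1 := hρ1
  exact (ratio_eq hq.1 hq.2 (key a haK) (key b hbK)).symm
end

section
/- For any complex x not equal to 0, -1, -2, ..., the limit as q→1⁻ of ((q;q)_∞ / (q^x;q)_∞) · (1-q)^{1-x} equals Γ(x). -/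
open Filter Topology

noncomputable def qgE (q : ℝ) (a : ℂ) : ℂ := Complex.exp (a * Real.log q)

lemma qgE_add (q : ℝ) (a b : ℂ) : qgE q (a + b) = qgE q a * qgE q b := by
  rw [qgE, qgE, qgE, ← Complex.exp_add, add_mul]

lemma qgE_pow (q : ℝ) (a : ℂ) (k : ℕ) : qgE q a ^ k = qgE q (k * a) := by
  rw [qgE, qgE, ← Complex.exp_nat_mul]
  congr 1; ring

lemma norm_qgE (q : ℝ) (a : ℂ) : ‖qgE q a‖ = Real.exp (a.re * Real.log q) := by
  rw [qgE, Complex.norm_exp]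
  norm_num [Complex.mul_re]

lemma qgE_natCast (q : ℝ) (hq : 0 < q) (n : ℕ) : qgE q (n : ℂ) = (q : ℂ) ^ n := by
  rw [qgE, Complex.exp_nat_mul, ← Complex.ofReal_exp, Real.exp_log hq]

lemma qgE_natCast' (q : ℝ) (hq : 0 < q) (n : ℕ) : qgE q (n : ℂ) = ((q ^ n : ℝ) : ℂ) := by
  rw [qgE_natCast q hq]; push_cast; ring

lemma norm_qgE_lt_one {q : ℝ} (hq0 : 0 < q) (hq1 : q < 1) {a : ℂ} (ha : 0 < a.re) :
    ‖qgE q a‖ < 1 := by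
  rw [norm_qgE]
  have : Real.log q < 0 := Real.log_neg hq0 hq1
  rw [Real.exp_lt_one_iff]
  exact mul_neg_of_pos_of_neg ha this

-- global bound for exp
lemma qg_exp_taylor_bound (z : ℂ) : ‖Complex.exp z - 1 - z‖ ≤ 3 * ‖z‖ ^ 2 * Real.exp ‖z‖ := by
  have he1 : (1:ℝ) ≤ Real.exp ‖z‖ := Real.one_le_exp (norm_nonneg z)
  by_cases h : ‖z‖ ≤ 1
  · have := Complex.norm_exp_sub_one_sub_id_le (x := z) h
    nlinarith [norm_nonneg z, sq_nonneg ‖z‖]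
  · push_neg at h
    have hn1 : ‖Complex.exp z - 1 - z‖ ≤ ‖Complex.exp z - 1‖ + ‖z‖ := norm_sub_le _ _
    have hn2 : ‖Complex.exp z - 1‖ ≤ ‖Complex.exp z‖ + ‖(1:ℂ)‖ := norm_sub_le _ _
    have hn3 : ‖(1:ℂ)‖ = 1 := by simp
    have hn4 : ‖Complex.exp z‖ ≤ Real.exp ‖z‖ := by
      rw [Complex.norm_exp]
      exact Real.exp_le_exp.2 (le_trans (Complex.re_le_norm z) (le_of_eq rfl))
    have h1 : ‖Complex.exp z - 1 - z‖ ≤ Real.exp ‖z‖ + 1 + ‖z‖ := by linarith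
    have h2 : ‖z‖ ≤ Real.exp ‖z‖ := (by linarith [Real.add_one_le_exp ‖z‖])
    nlinarith [sq_nonneg ‖z‖, norm_nonneg z, mul_le_mul_of_nonneg_right h2
      (by nlinarith : (0:ℝ) ≤ 3 * ‖z‖ ^ 2 - 1)]

lemma qg_sinh_ineq {y : ℝ} (hy : 0 ≤ y) : y * Real.exp (-(y / 2)) ≤ 1 - Real.exp (-y) := by
  have h := Real.self_le_sinh_iff.mpr (by positivity : (0:ℝ) ≤ y / 2)
  rw [Real.sinh_eq] at h
  have e1 : Real.exp (-(y/2)) * Real.exp (y/2) = 1 := by rw [← Real.exp_add]; simp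
  have e2 : Real.exp (-(y/2)) * Real.exp (-(y/2)) = Real.exp (-y) := by
    rw [← Real.exp_add]; ring_nf
  nlinarith [Real.exp_pos (-(y/2)), mul_le_mul_of_nonneg_right h
    (by positivity : (0:ℝ) ≤ 2 * Real.exp (-(y/2)))]

lemma qg_key_ineq {c t : ℝ} (hc : 0 < c) (ht : 0 < t) :
    t ^ 2 * (Real.exp (-(c * t)) / (1 - Real.exp (-(c * t))) ^ 2) ≤ 1 / c ^ 2 := by
  set y := c * t with hy
  have hy0 : 0 < y := mul_pos hc ht
  have h1 : y * Real.exp (-(y/2)) ≤ 1 - Real.exp (-y) := qg_sinh_ineq hy0.le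
  have h2 : Real.exp (-y) < 1 := Real.exp_lt_one_iff.2 (by linarith)
  have h3 : 0 < 1 - Real.exp (-y) := by linarith
  have e2 : Real.exp (-(y/2)) * Real.exp (-(y/2)) = Real.exp (-y) := by
    rw [← Real.exp_add]; ring_nf
  have h4' := mul_self_le_mul_self (by positivity : 0 ≤ y * Real.exp (-(y/2))) h1
  have h4 : y^2 * Real.exp (-y) ≤ (1 - Real.exp (-y))^2 := by nlinarith [h4', e2]
  rw [le_div_iff₀ (by positivity : (0:ℝ) < c ^ 2)]
  calc t ^ 2 * (Real.exp (-y) / (1 - Real.exp (-y)) ^ 2) * c ^ 2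
      = (y^2 * Real.exp (-y)) / (1 - Real.exp (-y))^2 := by
        rw [hy]; field_simp
    _ ≤ (1 - Real.exp (-y))^2 / (1 - Real.exp (-y))^2 := by gcongr
    _ = 1 := by field_simp


-- eventual membership
lemma qg_ev {q₀ : ℝ} (h : q₀ < 1) : ∀ᶠ q : ℝ in 𝓝[<] 1, q₀ < q ∧ q < 1 := by
  filter_upwards [Ioo_mem_nhdsLT_of_mem (Set.mem_Ioc.2 ⟨h, le_refl 1⟩)] with q hq
  exact ⟨hq.1, hq.2⟩

lemma qg_log_tendsto : Tendsto (fun q : ℝ => Real.log q) (𝓝[<] 1) (𝓝[<] 0) := by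
  apply tendsto_nhdsWithin_of_tendsto_nhds_of_eventually_within
  · have : ContinuousAt Real.log 1 := Real.continuousAt_log one_ne_zero
    simpa using (this.tendsto.mono_left nhdsWithin_le_nhds)
  · filter_upwards [qg_ev (by norm_num : (0:ℝ) < 1)] with q hq
    exact Real.log_neg hq.1 hq.2

lemma qg_slope (a : ℂ) :
    Tendsto (fun s : ℝ => (1 - Complex.exp (a * s)) / (s : ℂ)) (𝓝[≠] (0:ℝ)) (𝓝 (-a)) := by
  have hd : HasDerivAt (fun s : ℝ => 1 - Complex.exp (a * s)) (-a) 0 := by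
    have h1 : HasDerivAt (fun z : ℂ => 1 - Complex.exp (a * z)) (-a) ((0:ℝ) : ℂ) := by
      have h2 : HasDerivAt (fun z : ℂ => a * z) a 0 := by
        simpa using (hasDerivAt_id (0:ℂ)).const_mul a
      have h3 := (Complex.hasDerivAt_exp (a * 0)).comp 0 h2
      have h4 : HasDerivAt (fun z : ℂ => Complex.exp (a * z)) a 0 := by
        simpa [Function.comp_def] using h3
      simpa using h4.const_sub 1
    exact h1.comp_ofReal
  have := hasDerivAt_iff_tendsto_slope.mp hd
  apply this.congr'
  filter_upwards [self_mem_nhdsWithin] with s hs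
  have hs0 : s ≠ 0 := hs
  rw [slope]
  simp only [vsub_eq_sub, mul_zero, Complex.exp_zero, sub_self, sub_zero, Complex.real_smul]
  rw [div_eq_inv_mul]
  push_cast
  norm_num

lemma qg_logratio : Tendsto (fun q : ℝ => Real.log q / (1 - q)) (𝓝[<] 1) (𝓝 (-1)) := by
  have hd : HasDerivAt Real.log 1 1 := by simpa using Real.hasDerivAt_log one_ne_zero
  have h := hasDerivAt_iff_tendsto_slope.mp hd
  have h2 : Tendsto (slope Real.log 1) (𝓝[<] 1) (𝓝 1) :=
    h.mono_left (nhdsWithin_mono _ (fun y hy => ne_of_lt hy))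
  have h3 : Tendsto (fun q : ℝ => -(slope Real.log 1 q)) (𝓝[<] 1) (𝓝 (-1)) := h2.neg
  apply h3.congr'
  filter_upwards [qg_ev (by norm_num : (0:ℝ) < 1)] with q hq
  rw [slope_def_field]
  rw [Real.log_one]
  field_simp
  rw [sub_zero, ← neg_sub 1 q, div_neg]
  ring

lemma qg_ratio_tendsto (a : ℂ) :
    Tendsto (fun q : ℝ => (1 - qgE q a) / (1 - (q : ℂ))) (𝓝[<] 1) (𝓝 a) := by
  have h1 : Tendsto (fun q : ℝ => (1 - Complex.exp (a * Real.log q)) / ((Real.log q : ℝ) : ℂ))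
      (𝓝[<] 1) (𝓝 (-a)) := (qg_slope a).comp (qg_log_tendsto.mono_right
        (nhdsWithin_mono _ (fun y hy => ne_of_lt hy)))
  have h2 : Tendsto (fun q : ℝ => ((Real.log q / (1 - q) : ℝ) : ℂ)) (𝓝[<] 1) (𝓝 (-1)) := by
    have := (Complex.continuous_ofReal.tendsto (-1 : ℝ)).comp qg_logratio
    rw [show ((-1:ℝ):ℂ) = -1 by norm_num] at this
    exact this
  have h3 := h1.mul h2
  rw [show (-a) * (-1 : ℂ) = a by ring] at h3
  apply h3.congr'
  filter_upwards [qg_ev (by norm_num : (0:ℝ) < 1)] with q hq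
  have hl : Real.log q ≠ 0 := ne_of_lt (Real.log_neg hq.1 hq.2)
  have hq1 : (1:ℝ) - q ≠ 0 := by linarith [hq.2]
  have hlc : ((Real.log q : ℝ) : ℂ) ≠ 0 := by exact_mod_cast hl
  have hqc : (1 : ℂ) - (q : ℂ) ≠ 0 := by
    rw [sub_ne_zero]
    intro h
    have : (1:ℝ) = q := by exact_mod_cast h
    linarith [hq.2]
  rw [qgE]
  push_cast
  field_simp


noncomputable def qgw (x : ℂ) (q : ℝ) (n : ℕ) : ℂ :=
  x * Complex.log (1 - qgE q ((n:ℂ) + 1)) - Complex.log (1 - qgE q ((n:ℂ) + x))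
    - (x - 1) * Complex.log (1 - qgE q (n:ℂ))

set_option maxHeartbeats 1000000 in
lemma qgw_bound (x : ℂ) {q : ℝ} (hq0 : 0 < q) (hq1 : q < 1) {n : ℕ}
    (hn : max 1 ‖x‖ + 1 ≤ (n : ℝ)) :
    ‖qgw x q n‖ ≤ 3 * (‖x‖ + ‖x‖ ^ 2) * (1 / ((n : ℝ) - max 1 ‖x‖) ^ 2) := by
  set β : ℝ := max 1 ‖x‖ with hβ
  set s : ℝ := Real.log q with hsdef
  have hs : s < 0 := Real.log_neg hq0 hq1
  set t : ℝ := -s with htdef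
  have ht : 0 < t := by simp [htdef]; linarith
  set C : ℝ := 3 * (‖x‖ + ‖x‖ ^ 2) with hC
  have hC0 : 0 ≤ C := by positivity
  have hβ1 : (1:ℝ) ≤ β := le_max_left _ _
  have hβx : ‖x‖ ≤ β := le_max_right _ _
  have hrex : |x.re| ≤ ‖x‖ := Complex.abs_re_le_norm x
  have hnb : 0 < (n:ℝ) - β := by linarith
  have hn1 : (1:ℝ) ≤ (n:ℝ) := by linarith
  set z1 : ℂ := qgE q ((n:ℂ) + 1) with hz1d
  set z2 : ℂ := qgE q ((n:ℂ) + x) with hz2d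
  set z3 : ℂ := qgE q (n:ℂ) with hz3d
  have hre1 : (0:ℝ) < ((n:ℂ) + 1).re := by simp; positivity
  have hre2 : (0:ℝ) < ((n:ℂ) + x).re := by
    simp only [Complex.add_re, Complex.natCast_re]
    have : -‖x‖ ≤ x.re := by cases abs_le.1 hrex; linarith
    linarith
  have hre3 : (0:ℝ) < ((n:ℂ)).re := by
    simp only [Complex.natCast_re]; linarith
  have hz1 : ‖z1‖ < 1 := norm_qgE_lt_one hq0 hq1 hre1
  have hz2 : ‖z2‖ < 1 := norm_qgE_lt_one hq0 hq1 hre2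
  have hz3 : ‖z3‖ < 1 := norm_qgE_lt_one hq0 hq1 hre3
  have H1 := Complex.hasSum_taylorSeries_neg_log hz1
  have H2 := Complex.hasSum_taylorSeries_neg_log hz2
  have H3 := Complex.hasSum_taylorSeries_neg_log hz3
  have Hc := (H1.mul_left x).sub H2 |>.sub (H3.mul_left (x - 1))
  have hval : x * -Complex.log (1 - z1) - -Complex.log (1 - z2)
      - (x - 1) * -Complex.log (1 - z3) = -(qgw x q n) := by
    rw [qgw]; ring
  rw [hval] at Hc
  -- the geometric bound series
  set r : ℝ := Real.exp (-(((n:ℝ) - β) * t)) with hrdef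
  have hr0 : 0 < r := Real.exp_pos _
  have hr1 : r < 1 := by
    rw [hrdef, Real.exp_lt_one_iff]
    nlinarith
  have hrn : ‖r‖ < 1 := by rwa [Real.norm_eq_abs, abs_of_pos hr0]
  have Hg := (hasSum_coe_mul_geometric_of_norm_lt_one hrn).mul_left (C * t ^ 2)
  -- pointwise bound
  have hbd : ∀ k : ℕ, ‖x * (z1 ^ k / k) - z2 ^ k / k - (x - 1) * (z3 ^ k / k)‖
      ≤ C * t ^ 2 * ((k : ℝ) * r ^ k) := by
    intro k
    rcases Nat.eq_zero_or_pos k with rfl | hk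
    · simp
    have hkR : (1:ℝ) ≤ (k:ℝ) := by exact_mod_cast hk
    have hk0 : (k:ℝ) ≠ 0 := by positivity
    have hkC : (k:ℂ) ≠ 0 := by exact_mod_cast (by positivity : (k:ℝ) ≠ 0)
    -- rewrite powers
    have e1 : z1 ^ k = qgE q ((k:ℂ) * (n:ℂ)) * qgE q (k:ℂ) := by
      rw [hz1d, qgE_pow, ← qgE_add]; congr 1; ring
    have e2 : z2 ^ k = qgE q ((k:ℂ) * (n:ℂ)) * qgE q ((k:ℂ) * x) := by
      rw [hz2d, qgE_pow, ← qgE_add]; congr 1; ring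
    have e3 : z3 ^ k = qgE q ((k:ℂ) * (n:ℂ)) := by rw [hz3d, qgE_pow]
    set φ : ℂ := x * qgE q (k:ℂ) - qgE q ((k:ℂ) * x) - (x - 1) with hφ
    have hfk : x * (z1 ^ k / k) - z2 ^ k / k - (x - 1) * (z3 ^ k / k)
        = qgE q ((k:ℂ) * (n:ℂ)) * φ / k := by
      rw [e1, e2, e3, hφ]; field_simp
    -- bound on φ
    have hφ1 : φ = x * (Complex.exp ((k:ℂ) * s) - 1 - (k:ℂ) * s)
        - (Complex.exp ((k:ℂ) * x * s) - 1 - (k:ℂ) * x * s) := by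
      rw [hφ, qgE, qgE]; ring
    have hb1 := qg_exp_taylor_bound ((k:ℂ) * s)
    have hb2 := qg_exp_taylor_bound ((k:ℂ) * x * s)
    have hn1' : ‖(k:ℂ) * (s:ℂ)‖ = (k:ℝ) * t := by
      rw [norm_mul]
      simp [Complex.norm_natCast, Complex.norm_real, abs_of_neg hs, htdef]
    have hn2' : ‖(k:ℂ) * x * (s:ℂ)‖ = (k:ℝ) * ‖x‖ * t := by
      rw [norm_mul, norm_mul]
      simp [Complex.norm_natCast, Complex.norm_real, abs_of_neg hs, htdef]
    rw [hn1'] at hb1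
    rw [hn2'] at hb2
    have hφbd : ‖φ‖ ≤ C * ((k:ℝ) * t) ^ 2 * Real.exp (β * ((k:ℝ) * t)) := by
      have l1 : ‖φ‖ ≤ ‖x‖ * ‖Complex.exp ((k:ℂ) * s) - 1 - (k:ℂ) * s‖
          + ‖Complex.exp ((k:ℂ) * x * s) - 1 - (k:ℂ) * x * s‖ := by
        rw [hφ1]
        calc ‖_ - _‖ ≤ ‖x * (Complex.exp ((k:ℂ) * s) - 1 - (k:ℂ) * s)‖
            + ‖Complex.exp ((k:ℂ) * x * s) - 1 - (k:ℂ) * x * s‖ := norm_sub_le _ _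
          _ = _ := by rw [norm_mul]
      have hkt : 0 < (k:ℝ) * t := by positivity
      have hexp1 : Real.exp ((k:ℝ) * t) ≤ Real.exp (β * ((k:ℝ) * t)) := by
        apply Real.exp_le_exp.2; nlinarith
      have hexp2 : Real.exp ((k:ℝ) * ‖x‖ * t) ≤ Real.exp (β * ((k:ℝ) * t)) := by
        apply Real.exp_le_exp.2; nlinarith
      have hx2 : ((k:ℝ) * ‖x‖ * t) ^ 2 = ‖x‖^2 * ((k:ℝ) * t)^2 := by ring
      calc ‖φ‖ ≤ ‖x‖ * (3 * ((k:ℝ) * t) ^ 2 * Real.exp ((k:ℝ)*t))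
          + 3 * ((k:ℝ) * ‖x‖ * t) ^ 2 * Real.exp ((k:ℝ) * ‖x‖ * t) := by
            refine l1.trans ?_
            gcongr
        _ ≤ ‖x‖ * (3 * ((k:ℝ) * t) ^ 2 * Real.exp (β * ((k:ℝ)*t)))
          + 3 * (‖x‖^2 * ((k:ℝ) * t)^2) * Real.exp (β * ((k:ℝ) * t)) := by
            rw [← hx2]; gcongr <;> positivity
        _ = C * ((k:ℝ) * t) ^ 2 * Real.exp (β * ((k:ℝ) * t)) := by rw [hC]; ring
    -- norm of the geometric part
    have hz3k : ‖qgE q ((k:ℂ) * (n:ℂ))‖ = Real.exp (-((k:ℝ) * (n:ℝ) * t)) := by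
      rw [norm_qgE]
      congr 1
      have hre : ((k:ℂ) * (n:ℂ)).re = (k:ℝ) * (n:ℝ) := by
        rw [← Nat.cast_mul, Complex.natCast_re, Nat.cast_mul]
      rw [hre, htdef]; ring
    have : ‖x * (z1 ^ k / k) - z2 ^ k / k - (x - 1) * (z3 ^ k / k)‖
        = ‖qgE q ((k:ℂ) * (n:ℂ))‖ * ‖φ‖ / (k:ℝ) := by
      rw [hfk, norm_div, norm_mul, Complex.norm_natCast]
    rw [this, hz3k]
    have hexpk : Real.exp (-((k:ℝ) * (n:ℝ) * t)) * Real.exp (β * ((k:ℝ) * t)) = r ^ k := by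
      rw [hrdef, ← Real.exp_nat_mul, ← Real.exp_add]
      congr 1; ring
    have hcombine : Real.exp (-((k:ℝ) * (n:ℝ) * t)) * (C * ((k:ℝ)*t)^2 * Real.exp (β * ((k:ℝ)*t))) / (k:ℝ)
        = C * t ^ 2 * ((k:ℝ) * r ^ k) := by
      rw [← hexpk]
      field_simp
    rw [← hcombine]
    gcongr
  -- put it together
  have htsum : ‖∑' k : ℕ, (x * (z1 ^ k / k) - z2 ^ k / k - (x - 1) * (z3 ^ k / k))‖
      ≤ C * t ^ 2 * (r / (1 - r) ^ 2) := tsum_of_norm_bounded Hg hbd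
  rw [Hc.tsum_eq, norm_neg] at htsum
  refine htsum.trans ?_
  have := qg_key_ineq hnb ht
  calc C * t ^ 2 * (r / (1 - r) ^ 2) = C * (t ^ 2 * (r / (1 - r) ^ 2)) := by ring
    _ ≤ C * (1 / ((n:ℝ) - β) ^ 2) := by
        apply mul_le_mul_of_nonneg_left _ hC0
        rw [hrdef] at *
        exact this


lemma qg_log_div_real (z : ℂ) (hz : z ≠ 0) (r : ℝ) (hr : 0 < r) :
    Complex.log (z / (r : ℂ)) = Complex.log z - ((Real.log r : ℝ) : ℂ) := by
  have h : z / (r : ℂ) = (((r⁻¹ : ℝ)) : ℂ) * z := by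
    push_cast
    rw [div_eq_inv_mul]
  rw [h, Complex.log_ofReal_mul (by positivity) hz, Real.log_inv]
  push_cast; ring

lemma qg_one_sub_pow_pos {q : ℝ} (hq0 : 0 < q) (hq1 : q < 1) {n : ℕ} (hn : 1 ≤ n) :
    0 < 1 - q ^ n := by
  have : q ^ n < 1 := pow_lt_one₀ hq0.le hq1 (by omega)
  linarith

lemma qg_ratio_real (N : ℕ) :
    Tendsto (fun q : ℝ => (1 - q ^ N) / (1 - q)) (𝓝[<] 1) (𝓝 (N : ℝ)) := by
  have h1 : Tendsto (fun q : ℝ => ∑ i ∈ Finset.range N, q ^ i) (𝓝[<] 1) (𝓝 (N : ℝ)) := by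
    have hc : Continuous (fun q : ℝ => ∑ i ∈ Finset.range N, q ^ i) :=
      continuous_finset_sum _ fun i _ => continuous_pow i
    simpa using (hc.tendsto 1).mono_left nhdsWithin_le_nhds
  apply h1.congr'
  filter_upwards [qg_ev (by norm_num : (0:ℝ) < 1)] with q hq
  have hq1 : q ≠ 1 := ne_of_lt hq.2
  rw [geom_sum_eq hq1]
  rw [show (q ^ N - 1) / (q - 1) = (1 - q ^ N) / (1 - q) by
    rw [← neg_sub 1 (q ^ N), ← neg_sub 1 q, neg_div_neg_eq]]

noncomputable def qgl (x : ℂ) (n : ℕ) : ℂ :=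
  x * ((Real.log (((n:ℝ) + 1) / (n:ℝ)) : ℝ) : ℂ) - Complex.log (((n:ℂ) + x) / (n:ℂ))

lemma qgw_tendsto (x : ℂ) {n : ℕ} (hn1 : 1 ≤ n) (hre : 0 < ((n:ℂ) + x).re) :
    Tendsto (fun q : ℝ => qgw x q n) (𝓝[<] 1) (𝓝 (qgl x n)) := by
  have hnR : (0:ℝ) < (n:ℝ) := by exact_mod_cast hn1
  have hnC : ((n:ℂ)) ≠ 0 := by exact_mod_cast (by positivity : (n:ℝ) ≠ 0)
  have hnxC : ((n:ℂ) + x) ≠ 0 := fun h => by simp [h] at hre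
  -- part A
  have hA : Tendsto (fun q : ℝ =>
      Complex.log (1 - qgE q ((n:ℂ) + 1)) - Complex.log (1 - qgE q (n:ℂ)))
      (𝓝[<] 1) (𝓝 ((Real.log (((n:ℝ) + 1) / (n:ℝ)) : ℝ) : ℂ)) := by
    have hratio : Tendsto (fun q : ℝ => (1 - q ^ (n+1)) / (1 - q ^ n))
        (𝓝[<] 1) (𝓝 (((n:ℝ) + 1) / (n:ℝ))) := by
      have h1 := qg_ratio_real (n+1)
      have h2 := qg_ratio_real n
      have h3 := h1.div h2 (by positivity)
      rw [Nat.cast_add, Nat.cast_one] at h3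
      apply h3.congr'
      filter_upwards [qg_ev (by norm_num : (0:ℝ) < 1)] with q hq
      simp only [Pi.div_apply]
      have d1 : (1:ℝ) - q ≠ 0 := by linarith [hq.2]
      have d2 : (1:ℝ) - q ^ n ≠ 0 := ne_of_gt (qg_one_sub_pow_pos hq.1 hq.2 hn1)
      field_simp
    have hlog : Tendsto (fun q : ℝ => Real.log ((1 - q ^ (n+1)) / (1 - q ^ n)))
        (𝓝[<] 1) (𝓝 (Real.log (((n:ℝ) + 1) / (n:ℝ)))) := by
      apply (Real.continuousAt_log (by positivity)).tendsto.comp hratio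
    have hcast := (Complex.continuous_ofReal.tendsto _).comp hlog
    apply hcast.congr'
    filter_upwards [qg_ev (by norm_num : (0:ℝ) < 1)] with q hq
    have p1 : 0 < 1 - q ^ (n+1) := qg_one_sub_pow_pos hq.1 hq.2 (by omega)
    have p3 : 0 < 1 - q ^ n := qg_one_sub_pow_pos hq.1 hq.2 hn1
    have e1 : (1:ℂ) - qgE q ((n:ℂ) + 1) = (((1 - q ^ (n+1) : ℝ)) : ℂ) := by
      rw [show ((n:ℂ) + 1) = ((n+1 : ℕ) : ℂ) by push_cast; ring, qgE_natCast' q hq.1]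
      push_cast; ring
    have e3 : (1:ℂ) - qgE q (n:ℂ) = (((1 - q ^ n : ℝ)) : ℂ) := by
      rw [qgE_natCast' q hq.1]; push_cast; ring
    simp only [Function.comp]
    rw [e1, e3, ← Complex.ofReal_log p1.le, ← Complex.ofReal_log p3.le,
      Real.log_div (ne_of_gt p1) (ne_of_gt p3)]
    push_cast; ring
  -- part B
  have hBratio : Tendsto (fun q : ℝ => (1 - qgE q ((n:ℂ) + x)) / (1 - qgE q (n:ℂ)))
      (𝓝[<] 1) (𝓝 (((n:ℂ) + x) / (n:ℂ))) := by
    have h1 := qg_ratio_tendsto ((n:ℂ) + x)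
    have h2 := qg_ratio_tendsto ((n:ℂ))
    have := h1.div h2 hnC
    apply this.congr'
    filter_upwards [qg_ev (by norm_num : (0:ℝ) < 1)] with q hq
    have hq1 : (1:ℂ) - (q:ℂ) ≠ 0 := by
      rw [sub_ne_zero]; intro h
      have : (1:ℝ) = q := by exact_mod_cast h
      linarith [hq.2]
    simp only [Pi.div_apply]
    have e3 : (1:ℂ) - qgE q (n:ℂ) = (((1 - q ^ n : ℝ)) : ℂ) := by
      rw [qgE_natCast' q hq.1]; push_cast; ring
    have d2 : (1:ℂ) - qgE q (n:ℂ) ≠ 0 := by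
      rw [e3]
      exact_mod_cast ne_of_gt (qg_one_sub_pow_pos hq.1 hq.2 hn1)
    have d1 : (1:ℂ) - (q:ℂ) ≠ 0 := hq1
    field_simp
  have hB : Tendsto (fun q : ℝ =>
      Complex.log (1 - qgE q ((n:ℂ) + x)) - Complex.log (1 - qgE q (n:ℂ)))
      (𝓝[<] 1) (𝓝 (Complex.log (((n:ℂ) + x) / (n:ℂ)))) := by
    have hslit : ((n:ℂ) + x) / (n:ℂ) ∈ Complex.slitPlane := by
      rw [Complex.mem_slitPlane_iff]
      left
      rw [div_eq_mul_inv, ← Complex.ofReal_natCast, ← Complex.ofReal_inv]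
      rw [Complex.mul_re, Complex.ofReal_re, Complex.ofReal_im]
      simp only [mul_zero, sub_zero]
      positivity
    have hlog := (continuousAt_clog hslit).tendsto.comp hBratio
    apply hlog.congr'
    have hzev : ∀ᶠ q : ℝ in 𝓝[<] 1, (1 - qgE q ((n:ℂ) + x)) ≠ 0 := by
      have hne := (qg_ratio_tendsto ((n:ℂ) + x)).eventually_ne hnxC
      filter_upwards [hne, qg_ev (by norm_num : (0:ℝ) < 1)] with q hq hq2
      intro h
      rw [h] at hq
      simp at hq
    filter_upwards [hzev, qg_ev (by norm_num : (0:ℝ) < 1)] with q hz hq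
    have p3 : 0 < 1 - q ^ n := qg_one_sub_pow_pos hq.1 hq.2 hn1
    have e3 : (1:ℂ) - qgE q (n:ℂ) = (((1 - q ^ n : ℝ)) : ℂ) := by
      rw [qgE_natCast' q hq.1]; push_cast; ring
    simp only [Function.comp]
    rw [e3, qg_log_div_real _ hz _ p3, ← Complex.ofReal_log p3.le]
  -- combine
  have := (hA.const_mul x).sub hB
  apply this.congr
  intro q
  rw [qgw]
  ring


section perq
variable {q : ℝ} (hq0 : 0 < q) (hq1 : q < 1)

lemma qgE_one (hq0 : 0 < q) : qgE q 1 = (q : ℂ) := by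
  rw [qgE, one_mul, ← Complex.ofReal_exp, Real.exp_log hq0]

lemma qg_cpow_eq (hq0 : 0 < q) (x : ℂ) : (q : ℂ) ^ x = qgE q x := by
  have hq : (q : ℂ) ≠ 0 := by exact_mod_cast ne_of_gt hq0
  rw [Complex.cpow_def_of_ne_zero hq, qgE, ← Complex.ofReal_log hq0.le, mul_comm]

lemma qg_summable_log (hq0 : 0 < q) (hq1 : q < 1) (a : ℂ) :
    Summable (fun i : ℕ => Complex.log (1 - qgE q ((i:ℂ) + a))) := by
  have hs : Real.log q < 0 := Real.log_neg hq0 hq1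
  have hgeom : Summable (fun i : ℕ => Real.exp (a.re * Real.log q) * (Real.exp (Real.log q)) ^ i) := by
    apply Summable.mul_left
    exact summable_geometric_of_lt_one (Real.exp_pos _).le
      (by rw [Real.exp_lt_one_iff]; exact hs)
  have hnorm : ∀ i : ℕ, ‖qgE q ((i:ℂ) + a)‖
      = Real.exp (a.re * Real.log q) * (Real.exp (Real.log q)) ^ i := by
    intro i
    rw [norm_qgE, ← Real.exp_nat_mul, ← Real.exp_add]
    congr 1
    simp only [Complex.add_re, Complex.natCast_re]
    ring
  have htend : Tendsto (fun i : ℕ => ‖qgE q ((i:ℂ) + a)‖) atTop (𝓝 0) := by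
    simp only [hnorm]
    have := hgeom.tendsto_atTop_zero
    exact this
  have hev : ∀ᶠ i : ℕ in atTop, ‖qgE q ((i:ℂ) + a)‖ ≤ 1/2 := by
    exact htend.eventually_le_const (by norm_num)
  apply Summable.of_norm_bounded_eventually_nat (g := fun i => 3/2 * ‖qgE q ((i:ℂ) + a)‖)
    (hgeom.mul_left (3/2) |>.congr (fun i => by rw [hnorm]))
  filter_upwards [hev] with i hi
  have : (1:ℂ) - qgE q ((i:ℂ) + a) = 1 + (-(qgE q ((i:ℂ) + a))) := by ring
  rw [this]
  exact (Complex.norm_log_one_add_half_le_self (by rwa [norm_neg])).trans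
    (by rw [norm_neg])

lemma qg_one_sub_qgE_nat_pos (hq0 : 0 < q) (hq1 : q < 1) (n : ℕ) (hn : 1 ≤ n) :
    (1:ℂ) - qgE q (n : ℂ) = ((1 - q ^ n : ℝ) : ℂ) ∧ ((1:ℂ) - qgE q (n:ℂ)) ≠ 0 := by
  constructor
  · rw [qgE_natCast' q hq0]; push_cast; ring
  · rw [qgE_natCast' q hq0]
    have := qg_one_sub_pow_pos hq0 hq1 hn
    intro h
    have h2 : (1 : ℂ) - ((q ^ n : ℝ) : ℂ) = (((1 - q^n : ℝ)) : ℂ) := by push_cast; ring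
    rw [h2] at h
    exact (ne_of_gt this) (by exact_mod_cast h)

-- main per-q identity
theorem qg_identity (x : ℂ) (hq0 : 0 < q) (hq1 : q < 1)
    (hnv : ∀ i : ℕ, (1:ℂ) - qgE q ((i:ℂ) + x) ≠ 0) (N₀ : ℕ) (hN₀ : 1 ≤ N₀) :
    qPochInf (q:ℂ) (q:ℂ) / qPochInf ((q:ℂ) ^ x) (q:ℂ) * (1 - (q:ℂ)) ^ ((1:ℂ) - x)
      = (∏ n ∈ Finset.range N₀, ((1 - qgE q ((n:ℂ)+1)) / (1 - qgE q ((n:ℂ)+x))))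
        * Complex.exp ((x-1) * ((Real.log ((1 - q^N₀)/(1-q)) : ℝ) : ℂ))
        * Complex.exp (∑' m : ℕ, qgw x q (m + N₀)) := by
  have hs : Real.log q < 0 := Real.log_neg hq0 hq1
  set L₁ : ℕ → ℂ := fun i => Complex.log (1 - qgE q ((i:ℂ) + 1)) with hL₁
  set L₂ : ℕ → ℂ := fun i => Complex.log (1 - qgE q ((i:ℂ) + x)) with hL₂
  have S₁ : Summable L₁ := qg_summable_log hq0 hq1 1
  have S₂ : Summable L₂ := qg_summable_log hq0 hq1 x
  have h1nz : ∀ i : ℕ, (1:ℂ) - qgE q ((i:ℂ) + 1) ≠ 0 := by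
    intro i
    have : ((i:ℂ) + 1) = (((i+1 : ℕ)) : ℂ) := by push_cast; ring
    rw [this]
    exact (qg_one_sub_qgE_nat_pos hq0 hq1 (i+1) (by omega)).2
  -- pochhammer as exp of sums
  have hP₁ : qPochInf (q:ℂ) (q:ℂ) = Complex.exp (∑' i, L₁ i) := by
    have hp := S₁.hasSum.cexp
    have he : (Complex.exp ∘ L₁) = fun i : ℕ => 1 - qgE q ((i:ℂ) + 1) :=
      funext fun i => Complex.exp_log (h1nz i)
    rw [he] at hp
    rw [qPochInf]
    rw [← hp.tprod_eq]
    apply tprod_congr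
    intro i
    rw [qgE_add, qgE_one hq0, qgE_natCast' q hq0]
    push_cast
    ring
  have hP₂ : qPochInf ((q:ℂ)^x) (q:ℂ) = Complex.exp (∑' i, L₂ i) := by
    have hp := S₂.hasSum.cexp
    have he : (Complex.exp ∘ L₂) = fun i : ℕ => 1 - qgE q ((i:ℂ) + x) :=
      funext fun i => Complex.exp_log (hnv i)
    rw [he] at hp
    rw [qPochInf]
    rw [← hp.tprod_eq]
    apply tprod_congr
    intro i
    rw [qgE_add, qg_cpow_eq hq0 x, qgE_natCast' q hq0]
    push_cast
    ring
  -- cpow of 1 - q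
  have hq1c : (0:ℝ) < 1 - q := by linarith
  have hcpow : ((1:ℂ) - (q:ℂ)) ^ ((1:ℂ) - x)
      = Complex.exp (((Real.log (1-q) : ℝ) : ℂ) * (1 - x)) := by
    have h1 : (1:ℂ) - (q:ℂ) = (((1 - q : ℝ)) : ℂ) := by push_cast; ring
    have h2 : (((1 - q : ℝ)) : ℂ) ≠ 0 := by exact_mod_cast ne_of_gt hq1c
    rw [h1, Complex.cpow_def_of_ne_zero h2, ← Complex.ofReal_log hq1c.le]
  -- tails
  have T₁ : Summable (fun m => L₁ (m + N₀)) := (summable_nat_add_iff N₀).mpr S₁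
  have T₂ : Summable (fun m => L₂ (m + N₀)) := (summable_nat_add_iff N₀).mpr S₂
  -- telescoping real sum
  set creal : ℕ → ℝ := fun m => Real.log (1 - q^(m + N₀ + 1)) - Real.log (1 - q^(m + N₀))
    with hcreal
  have hpos : ∀ m : ℕ, 0 < 1 - q ^ (m + N₀) := fun m =>
    qg_one_sub_pow_pos hq0 hq1 (by omega)
  have hpos' : ∀ m : ℕ, 0 < 1 - q ^ (m + N₀ + 1) := fun m =>
    qg_one_sub_pow_pos hq0 hq1 (by omega)
  have hcnn : ∀ m : ℕ, 0 ≤ creal m := by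
    intro m
    rw [hcreal]
    simp only
    have : q ^ (m + N₀ + 1) ≤ q ^ (m + N₀) :=
      pow_le_pow_of_le_one hq0.le hq1.le (by omega)
    have h2 : (1:ℝ) - q ^ (m+N₀) ≤ 1 - q ^ (m+N₀+1) := by linarith
    have := Real.log_le_log (hpos m) h2
    linarith
  have hpartial : ∀ M : ℕ, ∑ m ∈ Finset.range M, creal m
      = Real.log (1 - q^(M + N₀)) - Real.log (1 - q^(N₀)) := by
    intro M
    have h := Finset.sum_range_sub (fun m => Real.log (1 - q^(m + N₀))) M
    simp only [Nat.zero_add] at h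
    rw [← h]
    apply Finset.sum_congr rfl
    intro m _
    rw [hcreal]
    simp only
    rw [show m + 1 + N₀ = m + N₀ + 1 by omega]
  have hcsummable : Summable creal := by
    apply summable_of_sum_range_le (c := -Real.log (1 - q ^ N₀)) hcnn
    intro M
    rw [hpartial M]
    have hle : Real.log (1 - q^(M + N₀)) ≤ 0 :=
      Real.log_nonpos (hpos M).le (by nlinarith [pow_nonneg hq0.le (M + N₀)])
    linarith
  have hctendsto : Tendsto (fun M => ∑ m ∈ Finset.range M, creal m) atTop
      (𝓝 (-Real.log (1 - q^(N₀)))) := by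
    simp only [hpartial]
    have hq' : |q| < 1 := by rw [abs_of_pos hq0]; exact hq1
    have h0 : Tendsto (fun M : ℕ => q ^ (M + N₀)) atTop (𝓝 0) := by
      have := (tendsto_pow_atTop_nhds_zero_of_abs_lt_one hq').comp (tendsto_add_atTop_nat N₀)
      exact this
    have h1 : Tendsto (fun M : ℕ => Real.log (1 - q ^ (M + N₀))) atTop (𝓝 (Real.log 1)) := by
      apply (Real.continuousAt_log (by norm_num)).tendsto.comp
      have hc : Continuous (fun y : ℝ => (1:ℝ) - y) := by continuity
      have h1' := hc.tendsto (0:ℝ)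
      rw [sub_zero] at h1'
      exact h1'.comp h0
    rw [Real.log_one] at h1
    have := h1.sub_const (Real.log (1 - q^(N₀)))
    simpa using this
  have Hcreal : HasSum creal (-Real.log (1 - q^(N₀))) := by
    refine (Summable.hasSum_iff_tendsto_nat hcsummable).mpr hctendsto
  have HcC : HasSum (fun m => ((creal m : ℝ) : ℂ)) ((-Real.log (1 - q^(N₀)) : ℝ) : ℂ) :=
    Complex.hasSum_ofReal.mpr Hcreal
  -- w tail hassum
  have hwrw : ∀ m : ℕ, qgw x q (m + N₀)
      = (L₁ (m + N₀) - L₂ (m + N₀)) + (x - 1) * ((creal m : ℝ) : ℂ) := by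
    intro m
    have hA : Complex.log (1 - qgE q (((m + N₀ : ℕ) : ℂ) + 1))
        = ((Real.log (1 - q^(m + N₀ + 1)) : ℝ) : ℂ) := by
      have hcast : (((m + N₀ : ℕ)):ℂ) + 1 = (((m + N₀ + 1 : ℕ)) : ℂ) := by push_cast; ring
      rw [hcast, (qg_one_sub_qgE_nat_pos hq0 hq1 (m + N₀ + 1) (by omega)).1,
        ← Complex.ofReal_log (hpos' m).le]
    have hC : Complex.log (1 - qgE q ((m + N₀ : ℕ) : ℂ))
        = ((Real.log (1 - q^(m + N₀)) : ℝ) : ℂ) := by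
      rw [(qg_one_sub_qgE_nat_pos hq0 hq1 (m + N₀) (by omega)).1,
        ← Complex.ofReal_log (hpos m).le]
    rw [qgw, hcreal]
    simp only [hL₁, hL₂]
    rw [hA, hC, Complex.ofReal_sub]
    ring
  have Hw : HasSum (fun m => qgw x q (m + N₀))
      ((∑' m, L₁ (m + N₀)) - (∑' m, L₂ (m + N₀))
        + (x - 1) * ((-Real.log (1 - q^(N₀)) : ℝ) : ℂ)) := by
    have h1 := (T₁.hasSum.sub T₂.hasSum).add (HcC.mul_left (x - 1))
    have h2 : (fun m => L₁ (m + N₀) - L₂ (m + N₀) + (x - 1) * ((creal m : ℝ) : ℂ))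
        = fun m => qgw x q (m + N₀) := funext fun m => (hwrw m).symm
    rw [h2] at h1
    exact h1
  -- assemble
  rw [hP₁, hP₂, hcpow, ← Complex.exp_sub, ← Complex.exp_add]
  rw [← Summable.sum_add_tsum_nat_add N₀ S₁, ← Summable.sum_add_tsum_nat_add N₀ S₂]
  rw [Hw.tsum_eq]
  have hprod : (∏ n ∈ Finset.range N₀, ((1 - qgE q ((n:ℂ)+1)) / (1 - qgE q ((n:ℂ)+x))))
      = Complex.exp (∑ n ∈ Finset.range N₀, (L₁ n - L₂ n)) := by
    rw [Complex.exp_sum]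
    apply Finset.prod_congr rfl
    intro n _
    rw [Complex.exp_sub, hL₁, hL₂]
    simp only
    rw [Complex.exp_log (h1nz n), Complex.exp_log (hnv n)]
  rw [hprod, ← Complex.exp_add, ← Complex.exp_add]
  congr 1
  rw [Finset.sum_sub_distrib]
  rw [Real.log_div (ne_of_gt (qg_one_sub_pow_pos hq0 hq1 hN₀)) (ne_of_gt hq1c)]
  push_cast
  ring
end perq


set_option maxHeartbeats 1600000 in
theorem qg_gamma_lim (x : ℂ) (hx : ∀ n : ℕ, x ≠ -(n : ℂ)) (N₀ : ℕ) (hN₀ : 1 ≤ N₀)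
    (hsum : Summable (fun m : ℕ => qgl x (m + N₀))) :
    (∏ n ∈ Finset.range N₀, (((n:ℂ) + 1) / (x + (n:ℂ))))
      * Complex.exp ((x - 1) * ((Real.log (N₀ : ℝ) : ℝ) : ℂ))
      * Complex.exp (∑' m : ℕ, qgl x (m + N₀)) = Complex.Gamma x := by
  have hxn : ∀ j : ℕ, x + (j:ℂ) ≠ 0 := by
    intro j h
    exact hx j (by linear_combination h)
  set P : ℂ := ∏ n ∈ Finset.range N₀, (((n:ℂ) + 1) / (x + (n:ℂ))) with hP
  set Q : ℕ → ℂ := fun M => P * Complex.exp ((x - 1) * ((Real.log (N₀ : ℝ) : ℝ) : ℂ))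
    * Complex.exp (∑ m ∈ Finset.range M, qgl x (m + N₀)) with hQ
  -- Q M equals GammaSeq-type expression
  have hQeq : ∀ M : ℕ, Q M = Complex.GammaSeq x (M + N₀)
      * ((x + ((M + N₀ : ℕ) : ℂ)) / ((M + N₀ : ℕ) : ℂ)) := by
    intro M
    induction M with
    | zero =>
      have hN0R : (0:ℝ) < (N₀ : ℝ) := by exact_mod_cast hN₀
      have hN0C : ((N₀:ℕ) : ℂ) ≠ 0 := Nat.cast_ne_zero.mpr (by omega)
      have hexp : Complex.exp ((x - 1) * ((Real.log (N₀ : ℝ) : ℝ) : ℂ))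
          = ((N₀:ℕ) : ℂ) ^ (x - 1) := by
        rw [Complex.cpow_def_of_ne_zero hN0C, ← Complex.ofReal_natCast,
          ← Complex.ofReal_log hN0R.le, mul_comm]
      have hPfrac : P = ((N₀.factorial : ℕ) : ℂ) / (∏ n ∈ Finset.range N₀, (x + (n:ℂ))) := by
        rw [hP, Finset.prod_div_distrib]
        congr 1
        rw [← Finset.prod_range_add_one_eq_factorial N₀]
        push_cast
        rfl
      have hprodne : (∏ n ∈ Finset.range N₀, (x + (n:ℂ))) ≠ 0 :=
        Finset.prod_ne_zero_iff.mpr (fun n _ => hxn n)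
      have hcpow : ((N₀:ℕ) : ℂ) ^ (x - 1) = ((N₀:ℕ) : ℂ) ^ x / ((N₀:ℕ) : ℂ) := by
        rw [Complex.cpow_sub _ _ hN0C, Complex.cpow_one]
      rw [hQ]
      simp only [Finset.range_zero, Finset.sum_empty, Complex.exp_zero, mul_one, Nat.zero_add]
      rw [hexp, hPfrac, hcpow, Complex.GammaSeq, Finset.prod_range_succ]
      have hxN : x + ((N₀:ℕ):ℂ) ≠ 0 := hxn N₀
      field_simp
    | succ M ih =>
      have hKpos : 1 ≤ M + N₀ := by omega
      set K : ℕ := M + N₀ with hK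
      have hKC : ((K:ℕ) : ℂ) ≠ 0 := Nat.cast_ne_zero.mpr (by omega)
      have hKR : (0:ℝ) < (K : ℝ) := by exact_mod_cast hKpos
      have hQs : Q (M + 1) = Q M * Complex.exp (qgl x K) := by
        rw [hQ]
        simp only
        rw [Finset.sum_range_succ, Complex.exp_add]
        ring
      have hMN : M + 1 + N₀ = K + 1 := by omega
      rw [hQs, ih, hMN]
      -- now the GammaSeq ratio identity
      have hr : (0:ℝ) < ((K:ℝ) + 1) / (K:ℝ) := by positivity
      have hexp1 : Complex.exp (x * ((Real.log (((K:ℝ) + 1) / (K:ℝ)) : ℝ) : ℂ))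
          = ((((K:ℝ) + 1) / (K:ℝ) : ℝ) : ℂ) ^ x := by
        rw [Complex.cpow_def_of_ne_zero (by exact_mod_cast ne_of_gt hr),
          ← Complex.ofReal_log hr.le, mul_comm]
      have hKx : ((K:ℂ) + x) / (K:ℂ) ≠ 0 := by
        apply div_ne_zero _ hKC
        intro h
        exact hxn K (by linear_combination h)
      have hexpsub : Complex.exp (qgl x K)
          = ((((K:ℝ) + 1) / (K:ℝ) : ℝ) : ℂ) ^ x * ((K:ℂ) / ((K:ℂ) + x)) := by
        rw [qgl, Complex.exp_sub, hexp1, Complex.exp_log hKx]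
        rw [div_div_eq_mul_div]
        field_simp
      have hcpowmul : (((K:ℝ):ℂ) * ((((K:ℝ) + 1) / (K:ℝ) : ℝ) : ℂ)) ^ x
          = ((K:ℝ):ℂ) ^ x * ((((K:ℝ) + 1) / (K:ℝ) : ℝ) : ℂ) ^ x :=
        Complex.mul_cpow_ofReal_nonneg hKR.le hr.le x
      have hKmul : ((K:ℝ):ℂ) * ((((K:ℝ) + 1) / (K:ℝ) : ℝ) : ℂ) = ((K:ℂ) + 1) := by
        push_cast
        field_simp
      have hcpK : ((K+1:ℕ) : ℂ) ^ x = ((K:ℝ):ℂ) ^ x * ((((K:ℝ) + 1) / (K:ℝ) : ℝ) : ℂ) ^ x := by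
        rw [← hcpowmul, hKmul]
        norm_cast
      have hcastR : ((K:ℝ):ℂ) = ((K:ℕ):ℂ) := by norm_cast
      rw [hcastR] at hcpK
      have hfac : ((K+1).factorial : ℂ) = (((K:ℕ):ℂ) + 1) * (K.factorial : ℂ) := by
        rw [Nat.factorial_succ]
        push_cast
        ring
      have hprod1ne : (∏ j ∈ Finset.range (K+1), (x + (j:ℂ))) ≠ 0 :=
        Finset.prod_ne_zero_iff.mpr (fun n _ => hxn n)
      have hxK1 : x + (((K:ℕ):ℂ) + 1) ≠ 0 := by
        have := hxn (K+1)
        push_cast at this ⊢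
        exact this
      have hxK : x + ((K:ℕ):ℂ) ≠ 0 := hxn K
      have hKne1 : ((K:ℕ):ℂ) + 1 ≠ 0 := by
        have : ((K+1:ℕ):ℂ) ≠ 0 := Nat.cast_ne_zero.mpr (by omega)
        push_cast at this
        exact this
      have hKxcomm : ((K:ℕ):ℂ) + x ≠ 0 := by intro h; exact hxK (by linear_combination h)
      rw [Complex.GammaSeq, Complex.GammaSeq]
      rw [Finset.prod_range_succ (fun j => x + (j:ℂ)) (K+1)]
      rw [hexpsub, hcpK, hfac]
      generalize ((((K:ℝ) + 1) / (K:ℝ) : ℝ) : ℂ) ^ x = R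
      generalize ((K:ℕ):ℂ) ^ x = A
      push_cast
      field_simp
      ring
  -- limits
  have hQlim : Tendsto Q atTop (𝓝 (P * Complex.exp ((x - 1) * ((Real.log (N₀ : ℝ) : ℝ) : ℂ))
      * Complex.exp (∑' m : ℕ, qgl x (m + N₀)))) := by
    apply Tendsto.mul tendsto_const_nhds
    exact Complex.continuous_exp.continuousAt.tendsto.comp hsum.hasSum.tendsto_sum_nat
  have hratio : Tendsto (fun M : ℕ => (x + ((M + N₀ : ℕ) : ℂ)) / ((M + N₀ : ℕ) : ℂ))
      atTop (𝓝 1) := by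
    have h0 : Tendsto (fun M : ℕ => x / ((M + N₀ : ℕ) : ℂ)) atTop (𝓝 0) := by
      apply squeeze_zero_norm (a := fun M : ℕ => ‖x‖ * (1 / ((M + N₀ : ℕ) : ℝ)))
      · intro M
        rw [norm_div]
        rw [show ‖((M + N₀ : ℕ) : ℂ)‖ = ((M + N₀ : ℕ) : ℝ) by
          rw [Complex.norm_natCast]]
        rw [mul_one_div]
      · have := (tendsto_one_div_atTop_nhds_zero_nat (𝕜 := ℝ)).comp (tendsto_add_atTop_nat N₀)
        have h2 := this.const_mul ‖x‖
        simpa using h2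
    have h1 : Tendsto (fun M : ℕ => x / ((M + N₀ : ℕ) : ℂ) + 1) atTop (𝓝 (0 + 1)) :=
      h0.add tendsto_const_nhds
    rw [zero_add] at h1
    apply h1.congr
    intro M
    have hMC : ((M + N₀ : ℕ) : ℂ) ≠ 0 := Nat.cast_ne_zero.mpr (by omega)
    push_cast at hMC ⊢
    field_simp
  have hgamma : Tendsto (fun M : ℕ => Complex.GammaSeq x (M + N₀)) atTop
      (𝓝 (Complex.Gamma x)) :=
    (Complex.GammaSeq_tendsto_Gamma x).comp (tendsto_add_atTop_nat N₀)
  have hQlim2 : Tendsto Q atTop (𝓝 (Complex.Gamma x * 1)) := by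
    have := hgamma.mul hratio
    apply this.congr
    intro M
    rw [hQeq M]
  rw [mul_one] at hQlim2
  exact tendsto_nhds_unique hQlim hQlim2


lemma qg_nonvanish (x : ℂ) (hx : ∀ n : ℕ, x ≠ -(n : ℂ)) :
    ∀ᶠ q : ℝ in 𝓝[<] 1, ∀ i : ℕ, (1:ℂ) - qgE q ((i:ℂ) + x) ≠ 0 := by
  set q₀ : ℝ := max (1/2) (Real.exp (-(Real.pi / (‖x‖ + 1)))) with hq₀
  have hq₀1 : q₀ < 1 := by
    apply max_lt (by norm_num)
    rw [Real.exp_lt_one_iff]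
    have : 0 < Real.pi / (‖x‖ + 1) := by positivity
    linarith
  filter_upwards [qg_ev hq₀1] with q hq
  have hq0 : 0 < q := lt_trans (by positivity : (0:ℝ) < q₀) hq.1
  have hs : Real.log q < 0 := Real.log_neg hq0 hq.2
  have hslb : -(Real.pi / (‖x‖ + 1)) < Real.log q := by
    have h1 : Real.exp (-(Real.pi / (‖x‖ + 1))) ≤ q₀ := le_max_right _ _
    have h2 : Real.exp (-(Real.pi / (‖x‖ + 1))) < q := lt_of_le_of_lt h1 hq.1
    calc -(Real.pi / (‖x‖ + 1)) = Real.log (Real.exp (-(Real.pi / (‖x‖ + 1)))) := by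
          rw [Real.log_exp]
      _ < Real.log q := Real.log_lt_log (Real.exp_pos _) h2
  have hsabs : |Real.log q| * ‖x‖ < Real.pi := by
    rw [abs_of_neg hs]
    have h3 : -Real.log q < Real.pi / (‖x‖ + 1) := by linarith
    have h4 : 0 < ‖x‖ + 1 := by positivity
    calc -Real.log q * ‖x‖ ≤ Real.pi / (‖x‖ + 1) * ‖x‖ :=
          mul_le_mul_of_nonneg_right h3.le (norm_nonneg x)
      _ < Real.pi := by
          rw [div_mul_eq_mul_div, div_lt_iff₀ h4]
          nlinarith [Real.pi_pos, norm_nonneg x]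
  intro i
  intro hcon
  have hexp1 : Complex.exp (((i:ℂ) + x) * (Real.log q : ℂ)) = 1 := by
    rw [qgE] at hcon
    linear_combination -hcon
  rw [Complex.exp_eq_one_iff] at hexp1
  obtain ⟨k, hk⟩ := hexp1
  have him : x.im * Real.log q = (k:ℝ) * (2 * Real.pi) := by
    have := congrArg Complex.im hk
    simpa [Complex.mul_im, Complex.add_im, Complex.add_re, Complex.ofReal_re,
      Complex.ofReal_im, Complex.natCast_im, Complex.mul_re] using this
  have hre : ((i:ℝ) + x.re) * Real.log q = 0 := by
    have := congrArg Complex.re hk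
    simpa [Complex.mul_re, Complex.add_re, Complex.ofReal_re, Complex.ofReal_im,
      Complex.natCast_re, Complex.natCast_im, Complex.add_im, Complex.mul_im] using this
  have hkz : k = 0 := by
    by_contra hkne
    have h1 : (1:ℝ) ≤ |(k:ℝ)| := by
      rw [← Int.cast_abs]
      exact_mod_cast Int.one_le_abs (by exact_mod_cast hkne)
    have h2 : |x.im * Real.log q| ≤ ‖x‖ * |Real.log q| := by
      rw [abs_mul]
      apply mul_le_mul_of_nonneg_right (Complex.abs_im_le_norm x) (abs_nonneg _)
    have h3 : |(k:ℝ) * (2 * Real.pi)| = |(k:ℝ)| * (2 * Real.pi) := by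
      rw [abs_mul, abs_of_pos (by positivity : (0:ℝ) < 2 * Real.pi)]
    rw [him, h3] at h2
    nlinarith [Real.pi_pos, mul_comm ‖x‖ |Real.log q|]
  rw [hkz] at hk
  rw [Int.cast_zero, zero_mul] at hk
  -- hk : ((i:ℂ) + x) * (Real.log q : ℂ) = 0
  have hsC : ((Real.log q : ℝ) : ℂ) ≠ 0 := by exact_mod_cast ne_of_lt hs
  have : (i:ℂ) + x = 0 := by
    rcases mul_eq_zero.mp hk with h | h
    · exact h
    · exact absurd h hsC
  exact hx i (by linear_combination this)


theorem stmt1 (x : ℂ) (hx : ∀ n : ℕ, x ≠ -(n : ℂ)) :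
    Tendsto (fun q : ℝ =>
        qPochInf (q : ℂ) (q : ℂ) / qPochInf ((q : ℂ) ^ x) (q : ℂ)
          * (1 - (q : ℂ)) ^ ((1 : ℂ) - x))
      (𝓝[<] (1 : ℝ)) (𝓝 (Complex.Gamma x)) := by
  set β : ℝ := max 1 ‖x‖ with hβ
  set N₀ : ℕ := ⌈β⌉₊ + 2 with hN₀def
  have hβ1 : (1:ℝ) ≤ β := le_max_left _ _
  have hβx : ‖x‖ ≤ β := le_max_right _ _
  have hN₀R : β + 2 ≤ (N₀ : ℝ) := by
    rw [hN₀def]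
    push_cast
    have := Nat.le_ceil β
    linarith
  have hN₀1 : 1 ≤ N₀ := by omega
  have hnmb : ∀ m : ℕ, (m:ℝ) + 1 ≤ ((m + N₀ : ℕ) : ℝ) - β := by
    intro m
    have hceil := Nat.le_ceil β
    push_cast
    linarith
  have hnb : ∀ m : ℕ, β + 1 ≤ ((m + N₀ : ℕ) : ℝ) := by
    intro m
    have hceil := Nat.le_ceil β
    push_cast
    linarith
  set C : ℝ := 3 * (‖x‖ + ‖x‖ ^ 2) with hC
  have hC0 : 0 ≤ C := by positivity
  set bound : ℕ → ℝ := fun m => C * (1 / ((m:ℝ) + 1) ^ 2) with hbound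
  have hbound_sum : Summable bound := by
    apply Summable.mul_left
    have h1 : Summable (fun n : ℕ => 1 / ((n:ℝ)) ^ 2) :=
      Real.summable_one_div_nat_pow.mpr one_lt_two
    have h2 := (summable_nat_add_iff 1).mpr h1
    apply h2.congr
    intro m
    push_cast
    ring
  -- uniform bound
  have hb : ∀ᶠ q : ℝ in 𝓝[<] 1, ∀ m : ℕ, ‖qgw x q (m + N₀)‖ ≤ bound m := by
    filter_upwards [qg_ev (by norm_num : (0:ℝ) < 1)] with q hq m
    have h1 := qgw_bound x hq.1 hq.2 (n := m + N₀) (by rw [← hβ]; linarith [hnb m])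
    refine h1.trans ?_
    rw [hbound, ← hβ, ← hC]
    have h2 : (0:ℝ) < (m:ℝ) + 1 := by positivity
    apply mul_le_mul_of_nonneg_left _ hC0
    apply one_div_le_one_div_of_le (by positivity)
    apply pow_le_pow_left₀ h2.le (hnmb m)
  -- pointwise limits
  have hab : ∀ m : ℕ, Tendsto (fun q : ℝ => qgw x q (m + N₀)) (𝓝[<] 1)
      (𝓝 (qgl x (m + N₀))) := by
    intro m
    apply qgw_tendsto x (by omega)
    rw [Complex.add_re, Complex.natCast_re]
    have h1 : -‖x‖ ≤ x.re := by
      linarith [neg_abs_le x.re, Complex.abs_re_le_norm x]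
    have := hnb m
    linarith
  -- tail limit
  have htail : Tendsto (fun q : ℝ => ∑' m : ℕ, qgw x q (m + N₀)) (𝓝[<] 1)
      (𝓝 (∑' m : ℕ, qgl x (m + N₀))) :=
    tendsto_tsum_of_dominated_convergence hbound_sum hab hb
  -- summability of limit terms
  have hsuml : Summable (fun m : ℕ => qgl x (m + N₀)) := by
    apply Summable.of_norm_bounded hbound_sum
    intro m
    have : Tendsto (fun q : ℝ => ‖qgw x q (m + N₀)‖) (𝓝[<] 1) (𝓝 ‖qgl x (m + N₀)‖) :=
      (continuous_norm.tendsto _).comp (hab m)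
    apply le_of_tendsto this
    filter_upwards [hb] with q hq
    exact hq m
  -- head limits
  have hhead : Tendsto (fun q : ℝ =>
      ∏ n ∈ Finset.range N₀, ((1 - qgE q ((n:ℂ)+1)) / (1 - qgE q ((n:ℂ)+x))))
      (𝓝[<] 1) (𝓝 (∏ n ∈ Finset.range N₀, (((n:ℂ) + 1) / (x + (n:ℂ))))) := by
    apply tendsto_finset_prod
    intro n _
    have hnxne : ((n:ℂ) + x) ≠ 0 := by
      intro h
      exact hx n (by linear_combination h)
    have h1 := (qg_ratio_tendsto ((n:ℂ) + 1)).div (qg_ratio_tendsto ((n:ℂ) + x)) hnxne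
    have h2 : (((n:ℂ) + 1) / ((n:ℂ) + x)) = ((n:ℂ) + 1) / (x + (n:ℂ)) := by
      rw [add_comm (n:ℂ) x]
    rw [h2] at h1
    apply h1.congr'
    filter_upwards [qg_ev (by norm_num : (0:ℝ) < 1)] with q hq
    have hq1 : (1:ℂ) - (q:ℂ) ≠ 0 := by
      rw [sub_ne_zero]
      intro h
      have : (1:ℝ) = q := by exact_mod_cast h
      linarith [hq.2]
    simp only [Pi.div_apply]
    rw [div_div_div_cancel_right₀ hq1]
  -- middle limit
  have hmid : Tendsto (fun q : ℝ =>
      Complex.exp ((x-1) * ((Real.log ((1 - q^N₀)/(1-q)) : ℝ) : ℂ)))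
      (𝓝[<] 1) (𝓝 (Complex.exp ((x - 1) * ((Real.log (N₀ : ℝ) : ℝ) : ℂ)))) := by
    have h1 := qg_ratio_real N₀
    have hN₀pos : (0:ℝ) < (N₀ : ℝ) := by linarith
    have h2 : Tendsto (fun q : ℝ => Real.log ((1 - q^N₀)/(1-q))) (𝓝[<] 1)
        (𝓝 (Real.log (N₀ : ℝ))) :=
      (Real.continuousAt_log (ne_of_gt hN₀pos)).tendsto.comp h1
    have h3 := (Complex.continuous_ofReal.tendsto _).comp h2
    have h4 : Tendsto (fun q : ℝ => (x-1) * ((Real.log ((1 - q^N₀)/(1-q)) : ℝ) : ℂ))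
        (𝓝[<] 1) (𝓝 ((x-1) * ((Real.log (N₀ : ℝ) : ℝ) : ℂ))) := h3.const_mul _
    exact (Complex.continuous_exp.tendsto _).comp h4
  -- exp of tail
  have hexptail : Tendsto (fun q : ℝ => Complex.exp (∑' m : ℕ, qgw x q (m + N₀)))
      (𝓝[<] 1) (𝓝 (Complex.exp (∑' m : ℕ, qgl x (m + N₀)))) :=
    (Complex.continuous_exp.tendsto _).comp htail
  -- combine
  have hcomb := (hhead.mul hmid).mul hexptail
  rw [qg_gamma_lim x hx N₀ hN₀1 hsuml] at hcomb
  apply hcomb.congr'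
  filter_upwards [qg_nonvanish x hx, qg_ev (by norm_num : (0:ℝ) < 1)] with q hnv hq
  exact (qg_identity x hq.1 hq.2 hnv N₀ hN₀1).symm
end

section
/- Let a, b, c > 0 with a ≠ c. Then for every complex u on the circle with center a(b+c)/(a-c) and radius √(ac(a+b)(b+c))/|a-c| (and with u ≠ -a, u ≠ b+c), the value u/(u+a) · (u-b)/(u-b-c) is real. -/
theorem stmt7 (a b c : ℝ) (ha : 0 < a) (hb : 0 < b) (hc : 0 < c) (hac : a ≠ c)
    (u : ℂ)
    (hcirc : ‖u - ((a * (b + c) / (a - c) : ℝ) : ℂ)‖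
      = Real.sqrt (a * c * (a + b) * (b + c)) / |a - c|)
    (hu₁ : u ≠ -(a : ℂ)) (hu₂ : u ≠ (b : ℂ) + (c : ℂ)) :
    (u / (u + (a : ℂ)) * ((u - (b : ℂ)) / (u - (b : ℂ) - (c : ℂ)))).im = 0 := by
  have hacne : a - c ≠ 0 := sub_ne_zero.mpr hac
  set x := u.re with hx
  set y := u.im with hy
  -- turn the circle condition into a polynomial equation
  have H : (x - a * (b + c) / (a - c))^2 + y^2 = a * c * (a + b) * (b + c) / (a - c)^2 := by
    have h2 := congrArg (· ^ 2) hcirc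
    simp only [Complex.sq_norm, div_pow, sq_abs] at h2
    rw [Real.sq_sqrt (by positivity)] at h2
    have h3 : ∀ k : ℝ, Complex.normSq (u - (k : ℂ)) = (x - k)^2 + y^2 := by
      intro k
      simp [Complex.normSq_apply, Complex.sub_re, Complex.sub_im]; ring
    rw [h3] at h2
    exact h2
  have B : (a - c) * (x^2 + y^2) - 2 * a * (b + c) * x + a * b * (b + c) = 0 := by
    have h2 : (a - c) * ((a - c) * (x^2 + y^2) - 2 * a * (b + c) * x + a * b * (b + c)) = 0 := by
      field_simp at H
      nlinarith [H]
    exact (mul_eq_zero.mp h2).resolve_left hacne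
  have hd1 : u + (a : ℂ) ≠ 0 := by
    intro h; apply hu₁; linear_combination h
  have hd2 : u - (b : ℂ) - (c : ℂ) ≠ 0 := by
    intro h; apply hu₂; linear_combination h
  have hw : (u + (a : ℂ)) * (u - (b : ℂ) - (c : ℂ)) ≠ 0 := mul_ne_zero hd1 hd2
  rw [div_mul_div_comm, Complex.div_im]
  rw [div_sub_div_same]
  have key : (u * (u - (b : ℂ))).im * ((u + (a : ℂ)) * (u - (b : ℂ) - (c : ℂ))).re
      - (u * (u - (b : ℂ))).re * ((u + (a : ℂ)) * (u - (b : ℂ) - (c : ℂ))).im = 0 := by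
    simp only [Complex.mul_im, Complex.mul_re, Complex.add_re, Complex.add_im,
      Complex.sub_re, Complex.sub_im, Complex.ofReal_re, Complex.ofReal_im, ← hx, ← hy]
    linear_combination y * B
  rw [key, zero_div]
end

section
/- Consistency of the Jacobi corners transition kernels for n = 2: for 0 < z < 1 and θ > 0, α > 0, M ≥ 2, the integral over 0 < y₁ < z < y₂ < 1 of (y₁y₂)^θ (y₂-y₁)^{1-2θ} |y₂ - z|^{θ-1} |z - y₁|^{θ-1} z^{-2θ} · (y₂-y₁)^{2θ} (y₁y₂)^{θα - 1} ((1-y₁)(1-y₂))^{θ|M-2|+θ-1} dy₁ dy₂ is equal to a constant (independent of z) times z^{θα-1} (1-z)^{θ(M-1)+θ-1}. -/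
open MeasureTheory

noncomputable def jacDer (z : ℝ) (p : ℝ × ℝ) : (ℝ × ℝ) →L[ℝ] (ℝ × ℝ) :=
  (Matrix.toLin (Module.Basis.finTwoProd ℝ) (Module.Basis.finTwoProd ℝ)
    (Matrix.of ![![z⁻¹ * p.2, z⁻¹ * p.1],
      ![-((1-z)⁻¹ * (1-p.2)), -((1-z)⁻¹ * (1-p.1))]])).toContinuousLinearMap

theorem jacDer_hasFDerivAt (z : ℝ) (p : ℝ × ℝ) :
    HasFDerivAt (fun q : ℝ × ℝ => (z⁻¹ * (q.1 * q.2), (1-z)⁻¹ * ((1-q.1) * (1-q.2))))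
      (jacDer z p) p := by
  have h1 : HasFDerivAt (fun q : ℝ × ℝ => z⁻¹ * (q.1 * q.2))
      (z⁻¹ • (p.1 • ContinuousLinearMap.snd ℝ ℝ ℝ + p.2 • ContinuousLinearMap.fst ℝ ℝ ℝ)) p :=
    (hasFDerivAt_fst.mul hasFDerivAt_snd).const_mul z⁻¹
  have ha : HasFDerivAt (fun q : ℝ × ℝ => 1 - q.1) (0 - ContinuousLinearMap.fst ℝ ℝ ℝ) p :=
    (hasFDerivAt_const 1 p).sub hasFDerivAt_fst
  have hb : HasFDerivAt (fun q : ℝ × ℝ => 1 - q.2) (0 - ContinuousLinearMap.snd ℝ ℝ ℝ) p :=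
    (hasFDerivAt_const 1 p).sub hasFDerivAt_snd
  have h2 : HasFDerivAt (fun q : ℝ × ℝ => (1-z)⁻¹ * ((1-q.1) * (1-q.2)))
      ((1-z)⁻¹ • ((1-p.1) • (0 - ContinuousLinearMap.snd ℝ ℝ ℝ) +
        (1-p.2) • (0 - ContinuousLinearMap.fst ℝ ℝ ℝ))) p :=
    (ha.mul hb).const_mul (1-z)⁻¹
  have key := h1.prodMk h2
  have heq : (((z⁻¹ • (p.1 • ContinuousLinearMap.snd ℝ ℝ ℝ + p.2 • ContinuousLinearMap.fst ℝ ℝ ℝ))).prod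
      ((1-z)⁻¹ • ((1-p.1) • (0 - ContinuousLinearMap.snd ℝ ℝ ℝ) +
        (1-p.2) • (0 - ContinuousLinearMap.fst ℝ ℝ ℝ))))
      = jacDer z p := by
    refine ContinuousLinearMap.ext fun q => Prod.ext ?_ ?_ <;>
      · simp [jacDer, Matrix.toLin_apply, Module.Basis.coe_finTwoProd_repr, Fin.sum_univ_two,
          Module.Basis.finTwoProd_zero, Module.Basis.finTwoProd_one, Matrix.mulVec, dotProduct]
        ring
  rwa [heq] at key

theorem jacDer_det (z : ℝ) (p : ℝ × ℝ) :
    (jacDer z p).det = (p.1 - p.2) * (z⁻¹ * (1-z)⁻¹) := by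
  have h : (jacDer z p).det = LinearMap.det (Matrix.toLin (Module.Basis.finTwoProd ℝ) (Module.Basis.finTwoProd ℝ)
      (Matrix.of ![![z⁻¹ * p.2, z⁻¹ * p.1],
        ![-((1-z)⁻¹ * (1-p.2)), -((1-z)⁻¹ * (1-p.1))]])) := rfl
  rw [h, LinearMap.det_toLin, Matrix.det_fin_two]
  simp only [Matrix.of_apply, Matrix.cons_val', Matrix.cons_val_zero, Matrix.cons_val_one,
    Matrix.head_cons, Matrix.empty_val', Matrix.cons_val_fin_one, Matrix.head_fin_const]
  ring

theorem keyid (θ c m z x y : ℝ) (hz0 : 0 < z) (hz1 : z < 1) (hx : 0 < x)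
    (hxz : x < z) (hzy : z < y) (hy1 : y < 1) :
    (x * y) ^ θ * (y - x) ^ (1 - 2 * θ) * (y - z) ^ (θ - 1) *
        (z - x) ^ (θ - 1) * z ^ (-2 * θ) * (y - x) ^ (2 * θ) *
        (x * y) ^ (c - 1) * ((1 - x) * (1 - y)) ^ (θ * (m - 2) + θ - 1)
      = z ^ (c - 1) * (1 - z) ^ (θ * (m - 1) + θ - 1) *
        (((y - x) * (z⁻¹ * (1 - z)⁻¹)) *
          ((z⁻¹ * (x * y)) ^ (c + θ - 1) *
           ((1 - z)⁻¹ * ((1 - x) * (1 - y))) ^ (θ * (m - 1) - 1) *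
           (1 - z⁻¹ * (x * y) - (1 - z)⁻¹ * ((1 - x) * (1 - y))) ^ (θ - 1))) := by
  have hy0 : 0 < y := lt_trans hz0 hzy
  have h1z : (0:ℝ) < 1 - z := by linarith
  have h1x : (0:ℝ) < 1 - x := by linarith
  have h1y : (0:ℝ) < 1 - y := by linarith
  have hxy : (0:ℝ) < x * y := by positivity
  have hyx : (0:ℝ) < y - x := by linarith
  have hyz : (0:ℝ) < y - z := by linarith
  have hzx : (0:ℝ) < z - x := by linarith
  have hW : 1 - z⁻¹ * (x * y) - (1 - z)⁻¹ * ((1 - x) * (1 - y))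
      = (z - x) * (y - z) * (z⁻¹ * (1 - z)⁻¹) := by
    field_simp
    ring
  have e1 : (z⁻¹ * (x * y)) ^ (c + θ - 1) = (x * y) ^ (c + θ - 1) * z ^ (-(c + θ - 1)) := by
    rw [Real.mul_rpow (by positivity) hxy.le, Real.inv_rpow hz0.le, ← Real.rpow_neg hz0.le]
    ring
  have e2 : ((1 - z)⁻¹ * ((1 - x) * (1 - y))) ^ (θ * (m - 1) - 1)
      = ((1 - x) * (1 - y)) ^ (θ * (m - 1) - 1) * (1 - z) ^ (-(θ * (m - 1) - 1)) := by
    rw [Real.mul_rpow (by positivity) (by positivity), Real.inv_rpow h1z.le,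
      ← Real.rpow_neg h1z.le]
    ring
  have e3 : (1 - z⁻¹ * (x * y) - (1 - z)⁻¹ * ((1 - x) * (1 - y))) ^ (θ - 1)
      = (z - x) ^ (θ - 1) * (y - z) ^ (θ - 1) * (z ^ (-(θ - 1)) * (1 - z) ^ (-(θ - 1))) := by
    rw [hW, Real.mul_rpow (by positivity) (by positivity),
      Real.mul_rpow hzx.le hyz.le, Real.mul_rpow (by positivity) (by positivity),
      Real.inv_rpow hz0.le, Real.inv_rpow h1z.le, ← Real.rpow_neg hz0.le,
      ← Real.rpow_neg h1z.le]
  have e4 : z⁻¹ = z ^ (-1 : ℝ) := by rw [Real.rpow_neg_one]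
  have e5 : (1 - z)⁻¹ = (1 - z) ^ (-1 : ℝ) := by rw [Real.rpow_neg_one]
  rw [e1, e2, e3, e4, e5]
  have hL : (x * y) ^ θ * (y - x) ^ (1 - 2 * θ) * (y - z) ^ (θ - 1) *
        (z - x) ^ (θ - 1) * z ^ (-2 * θ) * (y - x) ^ (2 * θ) *
        (x * y) ^ (c - 1) * ((1 - x) * (1 - y)) ^ (θ * (m - 2) + θ - 1)
      = ((x * y) ^ θ * (x * y) ^ (c - 1)) * ((y - x) ^ (1 - 2 * θ) * (y - x) ^ (2 * θ)) *
        ((y - z) ^ (θ - 1) * (z - x) ^ (θ - 1) * z ^ (-2 * θ) *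
          ((1 - x) * (1 - y)) ^ (θ * (m - 2) + θ - 1)) := by ring
  rw [hL, ← Real.rpow_add hxy, ← Real.rpow_add hyx,
    show θ + (c - 1) = c + θ - 1 by ring, show 1 - 2 * θ + 2 * θ = (1:ℝ) by ring,
    Real.rpow_one, show θ * (m - 2) + θ - 1 = θ * (m - 1) - 1 by ring]
  have hR : z ^ (c - 1) * (1 - z) ^ (θ * (m - 1) + θ - 1) *
      ((y - x) * (z ^ (-1:ℝ) * (1 - z) ^ (-1:ℝ)) *
        ((x * y) ^ (c + θ - 1) * z ^ (-(c + θ - 1)) *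
          (((1 - x) * (1 - y)) ^ (θ * (m - 1) - 1) * (1 - z) ^ (-(θ * (m - 1) - 1))) *
          ((z - x) ^ (θ - 1) * (y - z) ^ (θ - 1) * (z ^ (-(θ - 1)) * (1 - z) ^ (-(θ - 1))))))
    = ((x * y) ^ (c + θ - 1)) * (y - x) *
      ((y - z) ^ (θ - 1) * (z - x) ^ (θ - 1) *
        (((z ^ (c - 1) * z ^ (-1:ℝ)) * z ^ (-(c + θ - 1))) * z ^ (-(θ - 1))) *
        (((1 - x) * (1 - y)) ^ (θ * (m - 1) - 1))) *
      ((((1 - z) ^ (θ * (m - 1) + θ - 1) * (1 - z) ^ (-1:ℝ)) *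
          (1 - z) ^ (-(θ * (m - 1) - 1))) * (1 - z) ^ (-(θ - 1))) := by ring
  rw [hR, ← Real.rpow_add hz0, ← Real.rpow_add hz0, ← Real.rpow_add hz0,
    ← Real.rpow_add h1z, ← Real.rpow_add h1z, ← Real.rpow_add h1z,
    show c - 1 + (-1:ℝ) + -(c + θ - 1) + -(θ - 1) = -2 * θ by ring,
    show θ * (m - 1) + θ - 1 + (-1:ℝ) + -(θ * (m - 1) - 1) + -(θ - 1) = 0 by ring,
    Real.rpow_zero, mul_one]

set_option maxHeartbeats 1000000 in
theorem stmt17 (θ alp : ℝ) (hθ : 0 < θ) (halp : 0 < alp) (M : ℕ) (hM : 2 ≤ M) :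
    ∃ C : ℝ, ∀ z : ℝ, 0 < z → z < 1 →
      (∫ p in {p : ℝ × ℝ | 0 < p.1 ∧ p.1 < z ∧ z < p.2 ∧ p.2 < 1},
          (p.1 * p.2) ^ θ * (p.2 - p.1) ^ (1 - 2 * θ) * (p.2 - z) ^ (θ - 1) *
            (z - p.1) ^ (θ - 1) * z ^ (-2 * θ) * (p.2 - p.1) ^ (2 * θ) *
            (p.1 * p.2) ^ (θ * alp - 1) *
            ((1 - p.1) * (1 - p.2)) ^ (θ * ((M : ℝ) - 2) + θ - 1))
        = C * z ^ (θ * alp - 1) * (1 - z) ^ (θ * ((M : ℝ) - 1) + θ - 1) := by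
  set m : ℝ := (M : ℝ)
  set h : ℝ × ℝ → ℝ := fun q =>
    q.1 ^ (θ * alp + θ - 1) * q.2 ^ (θ * (m - 1) - 1) * (1 - q.1 - q.2) ^ (θ - 1) with hh
  refine ⟨∫ q in {q : ℝ × ℝ | 0 < q.1 ∧ 0 < q.2 ∧ q.1 + q.2 < 1}, h q, ?_⟩
  intro z hz0 hz1
  have hz0' : z ≠ 0 := ne_of_gt hz0
  have h1z : (0:ℝ) < 1 - z := by linarith
  have hz1' : (1:ℝ) - z ≠ 0 := ne_of_gt h1z
  set R : Set (ℝ × ℝ) := {p : ℝ × ℝ | 0 < p.1 ∧ p.1 < z ∧ z < p.2 ∧ p.2 < 1} with hR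
  set f : ℝ × ℝ → ℝ × ℝ :=
    fun q => (z⁻¹ * (q.1 * q.2), (1-z)⁻¹ * ((1-q.1) * (1-q.2))) with hf
  have hRmeas : MeasurableSet R := by
    have : IsOpen R := by
      apply IsOpen.inter (isOpen_lt continuous_const continuous_fst)
      apply IsOpen.inter (isOpen_lt continuous_fst continuous_const)
      exact IsOpen.inter (isOpen_lt continuous_const continuous_snd)
        (isOpen_lt continuous_snd continuous_const)
    exact this.measurableSet
  -- injectivity
  have hinj : Set.InjOn f R := by
    rintro p ⟨hp1, hp2, hp3, hp4⟩ q ⟨hq1, hq2, hq3, hq4⟩ hfpq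
    have e1 : p.1 * p.2 = q.1 * q.2 := by
      have := congrArg Prod.fst hfpq
      simp only [hf] at this; exact mul_left_cancel₀ (inv_ne_zero (by assumption)) this
    have e2 : (1-p.1) * (1-p.2) = (1-q.1) * (1-q.2) := by
      have := congrArg Prod.snd hfpq
      simp only [hf] at this; exact mul_left_cancel₀ (inv_ne_zero (by assumption)) this
    have e3 : p.1 + p.2 = q.1 + q.2 := by nlinarith [e1, e2]
    have e4 : (p.1 - q.1) * (p.1 - q.2) = 0 := by nlinarith [e1, e3]
    rcases mul_eq_zero.1 e4 with h5 | h5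
    · exact Prod.ext (by linarith) (by linarith)
    · exfalso; linarith
  -- image
  have himg : f '' R = {q : ℝ × ℝ | 0 < q.1 ∧ 0 < q.2 ∧ q.1 + q.2 < 1} := by
    ext q
    constructor
    · rintro ⟨p, ⟨hp1, hp2, hp3, hp4⟩, rfl⟩
      have hp2p : 0 < p.2 := lt_trans hz0 hp3
      have hu : 0 < z⁻¹ * (p.1 * p.2) := by positivity
      have hv : 0 < (1-z)⁻¹ * ((1-p.1) * (1-p.2)) := by
        have ha : 0 < 1 - p.1 := by linarith
        have hb : 0 < 1 - p.2 := by linarith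
        positivity
      refine ⟨hu, hv, ?_⟩
      have key : z * (1-z) * (z⁻¹ * (p.1 * p.2) + (1-z)⁻¹ * ((1-p.1) * (1-p.2)))
          = z * (1-z) - (z - p.1) * (p.2 - z) := by field_simp; ring
      have hw : 0 < (z - p.1) * (p.2 - z) := by nlinarith
      have hzz : 0 < z * (1-z) := by positivity
      show z⁻¹ * (p.1 * p.2) + (1-z)⁻¹ * ((1-p.1) * (1-p.2)) < 1
      nlinarith [key]
    · rintro ⟨hu, hv, huv⟩
      set s : ℝ := 1 + z * q.1 - (1-z) * q.2 with hs
      have hdid : s^2 - 4 * (z * q.1) = (s-2*z)^2 + 4*(z*(1-z))*(1-q.1-q.2) := by rw [hs]; ring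
      have hdpos : 0 < s^2 - 4 * (z * q.1) := by
        rw [hdid]
        have h4 : 0 < 4*(z*(1-z))*(1-q.1-q.2) := by
          have : 0 < 1 - q.1 - q.2 := by linarith
          positivity
        nlinarith [sq_nonneg (s - 2*z)]
      set r : ℝ := Real.sqrt (s^2 - 4 * (z * q.1)) with hr
      have hr2 : r^2 = s^2 - 4 * (z * q.1) := Real.sq_sqrt hdpos.le
      have hrpos : 0 < r := Real.sqrt_pos.2 hdpos
      have hqz : (2*z - s)^2 < r^2 := by
        rw [hr2, hdid]
        have h4 : 0 < 4*(z*(1-z))*(1-q.1-q.2) := by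
          have : 0 < 1 - q.1 - q.2 := by linarith
          positivity
        nlinarith
      have hlt1 : 2*z - s < r := by nlinarith
      have hlt2 : s - 2*z < r := by nlinarith
      have hprod : (s-r)/2 * ((s+r)/2) = z * q.1 := by linear_combination (-1/4 : ℝ) * hr2
      have hprod2 : (1 - (s-r)/2) * (1 - (s+r)/2) = (1-z) * q.2 := by
        rw [hs]; linear_combination (-1/4 : ℝ) * hr2
      have hy1z : (s-r)/2 < z := by linarith
      have hzy2 : z < (s+r)/2 := by linarith
      have hy1pos : 0 < (s-r)/2 := by
        have h1 : 0 < z * q.1 := by positivity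
        nlinarith [hprod]
      have hy2lt : (s+r)/2 < 1 := by
        have h1 : 0 < (1-z) * q.2 := by positivity
        have h2 : 0 < 1 - (s-r)/2 := by linarith
        nlinarith [hprod2]
      refine ⟨((s-r)/2, (s+r)/2), ⟨hy1pos, hy1z, hzy2, hy2lt⟩, ?_⟩
      have e1 : z⁻¹ * ((s-r)/2 * ((s+r)/2)) = q.1 := by rw [hprod]; field_simp
      have e2 : (1-z)⁻¹ * ((1 - (s-r)/2) * (1 - (s+r)/2)) = q.2 := by rw [hprod2]; field_simp
      exact Prod.ext e1 e2
  have hderiv : ∀ p ∈ R, HasFDerivWithinAt f (jacDer z p) R p :=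
    fun p _ => (jacDer_hasFDerivAt z p).hasFDerivWithinAt
  have hchg := integral_image_eq_integral_abs_det_fderiv_smul volume hRmeas hderiv hinj h
  rw [himg] at hchg
  have hcong : (∫ p in R,
          (p.1 * p.2) ^ θ * (p.2 - p.1) ^ (1 - 2 * θ) * (p.2 - z) ^ (θ - 1) *
            (z - p.1) ^ (θ - 1) * z ^ (-2 * θ) * (p.2 - p.1) ^ (2 * θ) *
            (p.1 * p.2) ^ (θ * alp - 1) *
            ((1 - p.1) * (1 - p.2)) ^ (θ * (m - 2) + θ - 1))
      = ∫ p in R, (z ^ (θ * alp - 1) * (1 - z) ^ (θ * (m - 1) + θ - 1)) *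
          (|(jacDer z p).det| • h (f p)) := by
    apply setIntegral_congr_fun hRmeas
    intro p hp
    obtain ⟨hp1, hp2, hp3, hp4⟩ := hp
    dsimp only
    have habs : |(jacDer z p).det| = (p.2 - p.1) * (z⁻¹ * (1-z)⁻¹) := by
      rw [jacDer_det]
      have hd1 : (p.1 - p.2) * (z⁻¹ * (1-z)⁻¹) ≤ 0 := by
        have : p.1 - p.2 ≤ 0 := by linarith [lt_trans hp2 hp3]
        have hzz : 0 ≤ z⁻¹ * (1-z)⁻¹ := by positivity
        exact mul_nonpos_of_nonpos_of_nonneg this hzz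
      rw [abs_of_nonpos hd1]; ring
    rw [habs, smul_eq_mul, hh, hf]
    have := keyid θ (θ * alp) m z p.1 p.2 hz0 hz1 hp1 hp2 hp3 hp4
    simpa using this
  rw [hcong, MeasureTheory.integral_const_mul, ← hchg]
  ring
end
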